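/- arXiv:1102.3177 — 6 statements merged into one kernel-verified Lean document; each statement's English description precedes it below -/
import Mathlib

section
/- For any two X-splits S₁ = {A₁,B₁} and S₂ = {A₂,B₂} with A₁ ∩ A₂ nonempty, the three splits S₁, S₂, and S₁ ⊔ S₂ := {A₁ ∩ A₂, B₁ ∪ B₂} form a weakly compatible split system. -/
/-- The six propositional shapes (in two atoms) that blocks of our split system take. -/
inductive SplitForm | fp | fnp | fq | fnq | fpq | fnpq
  deriving DecidableEq

instance : Fintype SplitForm :=
  ⟨⟨↑[SplitForm.fp, .fnp, .fq, .fnq, .fpq, .fnpq], Multiset.coe_nodup.mpr (by decide)⟩,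
    fun x => by cases x <;> decide⟩

namespace SplitForm

/-- Evaluation of a shape on two propositions. -/
def eval : SplitForm → Prop → Prop → Prop
  | .fp, P, _ => P
  | .fnp, P, _ => ¬ P
  | .fq, _, Q => Q
  | .fnq, _, Q => ¬ Q
  | .fpq, P, Q => P ∧ Q
  | .fnpq, P, Q => ¬ P ∨ ¬ Q

/-- Boolean evaluation of a shape. -/
def evalB : SplitForm → Bool → Bool → Bool
  | .fp, p, _ => p
  | .fnp, p, _ => !p
  | .fq, _, q => q
  | .fnq, _, q => !q
  | .fpq, p, q => p && q
  | .fnpq, p, q => !p || !q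

lemma eval_toB (f : SplitForm) (P Q : Prop) [Decidable P] [Decidable Q] :
    f.eval P Q ↔ f.evalB (decide P) (decide Q) = true := by
  cases f <;> simp [eval, evalB]

lemma core : ∀ f₁ f₂ f₃ : SplitForm, ∀ pa qa p1 q1 p2 q2 p3 q3 : Bool,
    ¬ (f₁.evalB pa qa = true ∧ f₂.evalB pa qa = true ∧ f₃.evalB pa qa = true ∧
       f₁.evalB p1 q1 = true ∧ ¬ f₂.evalB p1 q1 = true ∧ ¬ f₃.evalB p1 q1 = true ∧
       ¬ f₁.evalB p2 q2 = true ∧ f₂.evalB p2 q2 = true ∧ ¬ f₃.evalB p2 q2 = true ∧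
       ¬ f₁.evalB p3 q3 = true ∧ ¬ f₂.evalB p3 q3 = true ∧ f₃.evalB p3 q3 = true) := by
  set_option synthInstance.maxSize 4000 in
  set_option maxHeartbeats 1600000 in
  decide

end SplitForm

/-- The forbidden configuration in the definition of weak compatibility:
points `a, a₁, a₂, a₃` with `a ∈ A₁ ∩ A₂ ∩ A₃` and `aᵢ ∈ A_j ↔ i = j`. -/
def BadConfig {X : Type*} (A₁ A₂ A₃ : Set X) : Prop :=
  ∃ a a₁ a₂ a₃ : X, a ∈ A₁ ∩ A₂ ∩ A₃ ∧
    a₁ ∈ A₁ ∧ a₁ ∉ A₂ ∧ a₁ ∉ A₃ ∧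
    a₂ ∉ A₁ ∧ a₂ ∈ A₂ ∧ a₂ ∉ A₃ ∧
    a₃ ∉ A₁ ∧ a₃ ∉ A₂ ∧ a₃ ∈ A₃

/-- A system of splits (each split recorded as an ordered pair of its two blocks) is
weakly compatible if no triple of splits, with any choice of blocks, admits a bad
configuration. -/
def WeaklyCompatible {X : Type*} (𝒮 : Set (Set X × Set X)) : Prop :=
  ∀ S₁ ∈ 𝒮, ∀ S₂ ∈ 𝒮, ∀ S₃ ∈ 𝒮, ∀ A₁ A₂ A₃ : Set X,
    (A₁ = S₁.1 ∨ A₁ = S₁.2) → (A₂ = S₂.1 ∨ A₂ = S₂.2) → (A₃ = S₃.1 ∨ A₃ = S₃.2) →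
    ¬ BadConfig A₁ A₂ A₃

/-- The splits `S₁ = {A₁,B₁}`, `S₂ = {A₂,B₂}` and `S₁ ⊔ S₂ = {A₁ ∩ A₂, B₁ ∪ B₂}`
form a weakly compatible split system. -/
theorem stmt2 {X : Type*} (A₁ B₁ A₂ B₂ : Set X)
    (h₁u : A₁ ∪ B₁ = Set.univ) (h₁d : A₁ ∩ B₁ = ∅) (h₁ : A₁.Nonempty) (h₁' : B₁.Nonempty)
    (h₂u : A₂ ∪ B₂ = Set.univ) (h₂d : A₂ ∩ B₂ = ∅) (h₂ : A₂.Nonempty) (h₂' : B₂.Nonempty)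
    (hAA : (A₁ ∩ A₂).Nonempty) :
    WeaklyCompatible {(A₁, B₁), (A₂, B₂), (A₁ ∩ A₂, B₁ ∪ B₂)} := by
  classical
  have hB₁ : ∀ x, x ∈ B₁ ↔ x ∉ A₁ := by
    intro x
    constructor
    · intro h h'
      have : x ∈ A₁ ∩ B₁ := ⟨h', h⟩
      rw [h₁d] at this; exact this
    · intro h
      have : x ∈ A₁ ∪ B₁ := by rw [h₁u]; trivial
      rcases this with h' | h'
      · exact absurd h' h
      · exact h'
  have hB₂ : ∀ x, x ∈ B₂ ↔ x ∉ A₂ := by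
    intro x
    constructor
    · intro h h'
      have : x ∈ A₂ ∩ B₂ := ⟨h', h⟩
      rw [h₂d] at this; exact this
    · intro h
      have : x ∈ A₂ ∪ B₂ := by rw [h₂u]; trivial
      rcases this with h' | h'
      · exact absurd h' h
      · exact h'
  intro S₁ hS₁ S₂ hS₂ S₃ hS₃ C₁ C₂ C₃ hC₁ hC₂ hC₃
  simp only [Set.mem_insert_iff, Set.mem_singleton_iff] at hS₁ hS₂ hS₃
  have key : ∀ (S : Set X × Set X),
      (S = (A₁, B₁) ∨ S = (A₂, B₂) ∨ S = (A₁ ∩ A₂, B₁ ∪ B₂)) → ∀ C : Set X,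
      (C = S.1 ∨ C = S.2) →
      ∃ f : SplitForm, ∀ x, x ∈ C ↔ f.eval (x ∈ A₁) (x ∈ A₂) := by
    rintro S (rfl | rfl | rfl) C (rfl | rfl)
    · exact ⟨.fp, fun x => Iff.rfl⟩
    · exact ⟨.fnp, hB₁⟩
    · exact ⟨.fq, fun x => Iff.rfl⟩
    · exact ⟨.fnq, hB₂⟩
    · exact ⟨.fpq, fun x => Iff.rfl⟩
    · refine ⟨.fnpq, fun x => ?_⟩
      rw [SplitForm.eval, Set.mem_union, hB₁, hB₂]
  obtain ⟨f₁, k₁⟩ := key S₁ hS₁ C₁ hC₁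
  obtain ⟨f₂, k₂⟩ := key S₂ hS₂ C₂ hC₂
  obtain ⟨f₃, k₃⟩ := key S₃ hS₃ C₃ hC₃
  rintro ⟨a, b₁, b₂, b₃, ⟨⟨ha1, ha2⟩, ha3⟩, p1, p2, p3, q1, q2, q3, r1, r2, r3⟩
  rw [k₁, SplitForm.eval_toB] at ha1 p1 q1 r1
  rw [k₂, SplitForm.eval_toB] at ha2 p2 q2 r2
  rw [k₃, SplitForm.eval_toB] at ha3 p3 q3 r3
  exact SplitForm.core f₁ f₂ f₃ _ _ _ _ _ _ _ _
    ⟨ha1, ha2, ha3, p1, p2, p3, q1, q2, q3, r1, r2, r3⟩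
end

section
/- A circular split system over a set of cardinality n contains at most n(n-3)/2 distinct non-trivial splits, with equality achieved by the set of all splits induced by diagonals of a convex n-gon under a fixed circular ordering. -/
/-- `A` is an arc of the circular ordering given by `σ`. -/
def IsArc {n : ℕ} (σ : Equiv.Perm (ZMod n)) (A : Finset (ZMod n)) : Prop :=
  ∃ (i : ZMod n) (l : ℕ), A = (Finset.range l).image fun k : ℕ => σ (i + (k : ZMod n))

/-- `P` is a non-trivial split of `ZMod n` which is circular with respect to `σ`:
`P = {A, Aᶜ}` where both blocks have at least two elements and one of them is an arc. -/
def IsCircSplit {n : ℕ} [NeZero n] (σ : Equiv.Perm (ZMod n))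
    (P : Finset (Finset (ZMod n))) : Prop :=
  ∃ A : Finset (ZMod n), P = {A, Aᶜ} ∧ 2 ≤ A.card ∧ 2 ≤ Aᶜ.card ∧
    (IsArc σ A ∨ IsArc σ Aᶜ)

section Aux

variable {n : ℕ} [NeZero n] (σ : Equiv.Perm (ZMod n))

lemma zcast_inj {a b : ℕ} (ha : a < n) (hb : b < n) (h : (a : ZMod n) = (b : ZMod n)) :
    a = b := by
  have h2 := congrArg ZMod.val h
  rwa [ZMod.val_cast_of_lt ha, ZMod.val_cast_of_lt hb] at h2

def CArc (i : ZMod n) (l : ℕ) : Finset (ZMod n) :=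
  (Finset.range l).image fun k : ℕ => σ (i + (k : ZMod n))

lemma mem_CArc {x i : ZMod n} {l : ℕ} :
    x ∈ CArc σ i l ↔ ∃ k, k < l ∧ σ (i + (k : ZMod n)) = x := by
  simp [CArc]

lemma card_CArc (i : ZMod n) {l : ℕ} (hl : l ≤ n) : (CArc σ i l).card = l := by
  rw [CArc, Finset.card_image_of_injOn, Finset.card_range]
  intro a ha b hb hab
  simp only [Finset.coe_range, Set.mem_Iio] at ha hb
  have h1 : (a : ZMod n) = (b : ZMod n) := add_left_cancel (σ.injective hab)
  exact zcast_inj (lt_of_lt_of_le ha hl) (lt_of_lt_of_le hb hl) h1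

lemma CArc_eq_univ (i : ZMod n) {l : ℕ} (hl : n ≤ l) : CArc σ i l = Finset.univ := by
  apply Finset.eq_univ_of_forall
  intro x
  rw [mem_CArc]
  refine ⟨(σ.symm x - i).val, lt_of_lt_of_le (ZMod.val_lt _) hl, ?_⟩
  have h : (((σ.symm x - i).val : ℕ) : ZMod n) = σ.symm x - i := by
    simp [ZMod.natCast_val, ZMod.cast_id]
  rw [h]
  simp

lemma compl_CArc (i : ZMod n) {l : ℕ} (h0 : 0 < l) (hl : l ≤ n) :
    (CArc σ i l)ᶜ = CArc σ (i + (l : ZMod n)) (n - l) := by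
  have hsub : CArc σ (i + (l : ZMod n)) (n - l) ⊆ (CArc σ i l)ᶜ := by
    intro x hx
    rw [mem_CArc] at hx
    obtain ⟨k, hk, hkx⟩ := hx
    rw [Finset.mem_compl, mem_CArc]
    rintro ⟨k', hk', hk'x⟩
    rw [← hkx] at hk'x
    have h1 : i + (k' : ZMod n) = i + (l : ZMod n) + (k : ZMod n) := σ.injective hk'x
    have h2 : ((k' : ℕ) : ZMod n) = ((l + k : ℕ) : ZMod n) := by
      push_cast
      rw [add_assoc] at h1
      exact add_left_cancel h1
    have h3 := zcast_inj (lt_of_lt_of_le hk' hl) (by omega) h2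
    omega
  have hcard : ((CArc σ i l)ᶜ).card ≤ (CArc σ (i + (l : ZMod n)) (n - l)).card := by
    rw [Finset.card_compl, ZMod.card, card_CArc σ _ hl, card_CArc σ _ (Nat.sub_le n l)]
  exact (Finset.eq_of_subset_of_card_le hsub hcard).symm

lemma CArc_start_notmem (i : ZMod n) {l : ℕ} (hl : l ≤ n - 1) :
    σ (i + (-1)) ∉ CArc σ i l := by
  have hn1 : 1 ≤ n := Nat.one_le_iff_ne_zero.2 (NeZero.ne n)
  rw [mem_CArc]
  rintro ⟨k, hk, hkx⟩
  have h1 : (k : ZMod n) = -1 := add_left_cancel (σ.injective hkx)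
  have h2 : ((k : ℕ) : ZMod n) = ((n - 1 : ℕ) : ZMod n) := by
    rw [h1, Nat.cast_sub hn1, ZMod.natCast_self, Nat.cast_one, zero_sub]
  have h3 := zcast_inj (by omega) (by omega) h2
  omega

lemma CArc_inj {i j : ZMod n} {l : ℕ} (h0 : 0 < l) (hl : l ≤ n - 1)
    (h : CArc σ i l = CArc σ j l) : i = j := by
  have hj : σ (j + ((0 : ℕ) : ZMod n)) ∈ CArc σ j l := (mem_CArc σ).2 ⟨0, h0, rfl⟩
  rw [← h, mem_CArc] at hj
  obtain ⟨k, hk, hkj⟩ := hj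
  have h1 : j = i + (k : ZMod n) := by
    have h2 := σ.injective hkj
    simpa using h2.symm
  by_cases hk0 : k = 0
  · subst hk0; simpa using h1.symm
  · exfalso
    apply CArc_start_notmem σ j hl
    rw [← h, mem_CArc]
    refine ⟨k - 1, by omega, ?_⟩
    congr 1
    have hc : ((k - 1 : ℕ) : ZMod n) = (k : ZMod n) - 1 := by
      rw [Nat.cast_sub (by omega)]; simp
    rw [hc, h1]; ring

def SplitPair (p : ZMod n × ℕ) : Finset (Finset (ZMod n)) :=
  {CArc σ p.1 p.2, (CArc σ p.1 p.2)ᶜ}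

lemma splitPair_swap (hn : 4 ≤ n) {i : ZMod n} {l : ℕ} (hl2 : 2 ≤ l) (hln : l ≤ n - 2) :
    SplitPair σ (i + (l : ZMod n), n - l) = SplitPair σ (i, l) := by
  unfold SplitPair
  simp only
  rw [← compl_CArc σ i (by omega) (by omega), compl_compl, Finset.pair_comm]

lemma splitPair_eq_iff (hn : 4 ≤ n) {i j : ZMod n} {l m : ℕ}
    (hl2 : 2 ≤ l) (hln : l ≤ n - 2) (hm2 : 2 ≤ m) (hmn : m ≤ n - 2) :
    SplitPair σ (j, m) = SplitPair σ (i, l) ↔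
      (j = i ∧ m = l) ∨ (j = i + (l : ZMod n) ∧ m = n - l) := by
  constructor
  · intro h
    have hmem : CArc σ j m ∈ ({CArc σ i l, (CArc σ i l)ᶜ} : Finset (Finset (ZMod n))) := by
      have h' : SplitPair σ (j, m) = ({CArc σ i l, (CArc σ i l)ᶜ} : Finset (Finset (ZMod n))) := h
      rw [← h']
      exact Finset.mem_insert_self _ _
    rcases Finset.mem_insert.1 hmem with h1 | h1
    · have hml : m = l := by
        have hc := congrArg Finset.card h1
        rwa [card_CArc σ _ (by omega), card_CArc σ _ (by omega)] at hc
      subst hml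
      exact Or.inl ⟨CArc_inj σ (by omega) (by omega) h1, rfl⟩
    · rw [Finset.mem_singleton, compl_CArc σ i (by omega) (by omega)] at h1
      have hml : m = n - l := by
        have hc := congrArg Finset.card h1
        rwa [card_CArc σ _ (by omega), card_CArc σ _ (by omega)] at hc
      subst hml
      exact Or.inr ⟨CArc_inj σ (by omega) (by omega) h1, rfl⟩
  · rintro (⟨rfl, rfl⟩ | ⟨rfl, rfl⟩)
    · rfl
    · exact splitPair_swap σ hn hl2 hln

lemma isArc_block (hn : 4 ≤ n) {A : Finset (ZMod n)} (hA : IsArc σ A)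
    (h2 : 2 ≤ A.card) (h2c : 2 ≤ Aᶜ.card) :
    ∃ i l, 2 ≤ l ∧ l ≤ n - 2 ∧ A = CArc σ i l := by
  obtain ⟨i, l, hAeq⟩ := hA
  have hAC : A = CArc σ i l := hAeq
  have hln : l ≤ n := by
    by_contra hlt
    push_neg at hlt
    rw [hAC, CArc_eq_univ σ i hlt.le] at h2c
    simp at h2c
  have hcard : A.card = l := by rw [hAC, card_CArc σ i hln]
  have hcc : Aᶜ.card = n - l := by rw [Finset.card_compl, ZMod.card, hcard]
  exact ⟨i, l, by omega, by omega, hAC⟩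

lemma isCircSplit_iff_mem (hn : 4 ≤ n) (P : Finset (Finset (ZMod n))) :
    IsCircSplit σ P ↔
      P ∈ (Finset.univ ×ˢ Finset.Icc 2 (n - 2)).image (SplitPair σ) := by
  constructor
  · rintro ⟨A, rfl, h2, h2c, harc | harc⟩
    · obtain ⟨i, l, hl2, hln, hAC⟩ := isArc_block σ hn harc h2 h2c
      refine Finset.mem_image.2 ⟨(i, l), ?_, ?_⟩
      · exact Finset.mem_product.2 ⟨Finset.mem_univ _, Finset.mem_Icc.2 ⟨hl2, hln⟩⟩
      · rw [hAC]; rfl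
    · obtain ⟨i, l, hl2, hln, hAC⟩ :=
        isArc_block σ hn harc h2c (by rwa [compl_compl])
      refine Finset.mem_image.2 ⟨(i, l), ?_, ?_⟩
      · exact Finset.mem_product.2 ⟨Finset.mem_univ _, Finset.mem_Icc.2 ⟨hl2, hln⟩⟩
      · have : ({A, Aᶜ} : Finset (Finset (ZMod n))) = {Aᶜ, (Aᶜ)ᶜ} := by
          rw [compl_compl, Finset.pair_comm]
        rw [this, hAC]; rfl
  · intro h
    obtain ⟨⟨i, l⟩, hmem, rfl⟩ := Finset.mem_image.1 h
    have hl := Finset.mem_Icc.1 (Finset.mem_product.1 hmem).2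
    refine ⟨CArc σ i l, rfl, ?_, ?_, Or.inl ⟨i, l, rfl⟩⟩
    · rw [card_CArc σ i (by omega)]; omega
    · rw [Finset.card_compl, ZMod.card, card_CArc σ i (by omega)]; omega

lemma card_image_splitPair (hn : 4 ≤ n) :
    ((Finset.univ ×ˢ Finset.Icc 2 (n - 2)).image (SplitPair σ)).card = n * (n - 3) / 2 := by
  set D : Finset (ZMod n × ℕ) := Finset.univ ×ˢ Finset.Icc 2 (n - 2) with hD
  have hDcard : D.card = n * (n - 3) := by
    rw [hD, Finset.card_product, Finset.card_univ, ZMod.card, Nat.card_Icc]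
    congr 1
  have hfib : ∀ s ∈ D.image (SplitPair σ),
      (D.filter fun p => SplitPair σ p = s).card = 2 := by
    intro s hs
    obtain ⟨⟨i, l⟩, hq, rfl⟩ := Finset.mem_image.1 hs
    have hl := Finset.mem_Icc.1 (Finset.mem_product.1 hq).2
    have hset : (D.filter fun p => SplitPair σ p = SplitPair σ (i, l)) =
        {(i, l), (i + (l : ZMod n), n - l)} := by
      ext ⟨j, m⟩
      simp only [Finset.mem_filter, Finset.mem_insert, Finset.mem_singleton, hD,
        Finset.mem_product, Finset.mem_univ, true_and, Prod.mk.injEq, Finset.mem_Icc]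
      constructor
      · rintro ⟨hm, heq⟩
        exact (splitPair_eq_iff σ hn hl.1 hl.2 hm.1 hm.2).1 heq
      · rintro (⟨rfl, rfl⟩ | ⟨rfl, rfl⟩)
        · exact ⟨hl, rfl⟩
        · exact ⟨⟨by omega, by omega⟩, splitPair_swap σ hn hl.1 hl.2⟩
    rw [hset, Finset.card_insert_of_notMem, Finset.card_singleton]
    simp only [Finset.mem_singleton, Prod.mk.injEq, not_and]
    intro hi
    exfalso
    have hz : (l : ZMod n) = ((0 : ℕ) : ZMod n) := by
      have := (left_eq_add).1 hi
      simpa using this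
    have := zcast_inj (by omega) (by omega) hz
    omega
  have hsum : D.card = (D.image (SplitPair σ)).card * 2 := by
    rw [Finset.card_eq_sum_card_fiberwise (f := SplitPair σ) (t := D.image (SplitPair σ))
        (fun p hp => Finset.mem_image_of_mem _ hp),
      Finset.sum_congr rfl hfib, Finset.sum_const, smul_eq_mul]
  set c := (D.image (SplitPair σ)).card
  set N := n * (n - 3)
  omega

end Aux

/-- A circular split system over a set of cardinality `n` contains at most
`n(n-3)/2` distinct non-trivial splits, and the set of all splits circular with
respect to a fixed ordering has exactly `n(n-3)/2` elements. -/
theorem stmt4 (n : ℕ) [NeZero n] (hn : 4 ≤ n) (σ : Equiv.Perm (ZMod n)) :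
    (∀ 𝒮 : Finset (Finset (Finset (ZMod n))),
      (∀ P ∈ 𝒮, IsCircSplit σ P) → 𝒮.card ≤ n * (n - 3) / 2) ∧
    {P | IsCircSplit σ P}.ncard = n * (n - 3) / 2 := by
  constructor
  · intro 𝒮 h𝒮
    rw [← card_image_splitPair σ hn]
    apply Finset.card_le_card
    intro P hP
    exact (isCircSplit_iff_mem σ hn P).1 (h𝒮 P hP)
  · have hset : {P | IsCircSplit σ P} =
        ↑((Finset.univ ×ˢ Finset.Icc 2 (n - 2)).image (SplitPair σ)) := by
      ext P
      rw [Set.mem_setOf_eq, Finset.mem_coe]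
      exact isCircSplit_iff_mem σ hn P
    rw [hset, Set.ncard_coe_finset, card_image_splitPair σ hn]
end

section
/- Every pair of non-trivial X-splits is contained in some circular split system; equivalently, any two non-trivial X-splits form a circular split system. -/
/-- Any two non-trivial splits (given by blocks `A₁`, `A₂`, each with block and
co-block of size at least 2) form a circular split system: some circular ordering
realizes both as arc/complement cuts. -/
theorem stmt5 (n : ℕ) [NeZero n] (hn : 4 ≤ n) (A₁ A₂ : Finset (ZMod n))
    (h₁ : 2 ≤ A₁.card) (h₁' : 2 ≤ A₁ᶜ.card) (h₂ : 2 ≤ A₂.card) (h₂' : 2 ≤ A₂ᶜ.card) :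
    ∃ σ : Equiv.Perm (ZMod n),
      (IsArc σ A₁ ∨ IsArc σ A₁ᶜ) ∧ (IsArc σ A₂ ∨ IsArc σ A₂ᶜ) := by
  classical
  set B1 : Finset (ZMod n) := A₁ ∩ A₂ with hB1
  set B2 : Finset (ZMod n) := A₁ \ A₂ with hB2
  set B3 : Finset (ZMod n) := A₁ᶜ \ A₂ with hB3
  set B4 : Finset (ZMod n) := A₁ᶜ ∩ A₂ with hB4
  set L : List (ZMod n) := B1.toList ++ (B2.toList ++ (B3.toList ++ B4.toList)) with hL
  have hdisj : ∀ x : ZMod n,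
      ((x ∈ B1 → x ∉ B2 ∧ x ∉ B3 ∧ x ∉ B4) ∧ (x ∈ B2 → x ∉ B3 ∧ x ∉ B4) ∧
        (x ∈ B3 → x ∉ B4)) := by
    intro x
    simp only [hB1, hB2, hB3, hB4, Finset.mem_inter, Finset.mem_sdiff, Finset.mem_compl]
    tauto
  have hnodup : L.Nodup := by
    rw [hL]
    simp only [List.nodup_append, Finset.nodup_toList, true_and, List.Disjoint,
      Finset.mem_toList, List.mem_append]
    refine ⟨⟨fun a ha b hb hab => ((hdisj a).2.2 ha) (hab ▸ hb), fun a ha b hb hab => ?_⟩, fun a ha b hb hab => ?_⟩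
    · subst hab
      rcases hb with hb | hb
      exacts [((hdisj a).2.1 ha).1 hb, ((hdisj a).2.1 ha).2 hb]
    · subst hab
      rcases hb with hb | hb | hb
      exacts [((hdisj a).1 ha).1 hb, ((hdisj a).1 ha).2.1 hb, ((hdisj a).1 ha).2.2 hb]
  have hc1 : B1.card + B2.card = A₁.card := by
    rw [hB1, hB2]
    exact Finset.card_inter_add_card_sdiff A₁ A₂
  have hc2 : (B3.card + B4.card) = A₁ᶜ.card := by
    rw [hB3, hB4, add_comm]
    exact Finset.card_inter_add_card_sdiff A₁ᶜ A₂
  have hcompl : A₁.card + A₁ᶜ.card = n := by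
    rw [Finset.card_add_card_compl, ZMod.card]
  have hlen : L.length = n := by
    simp only [hL, List.length_append, Finset.length_toList]
    omega
  have hlt : ∀ j : ZMod n, j.val < L.length := fun j => by
    rw [hlen]; exact j.val_lt
  let g : ZMod n → ZMod n := fun j => L.get ⟨j.val, hlt j⟩
  have hginj : Function.Injective g := by
    intro a b hab
    have h2 : (⟨a.val, hlt a⟩ : Fin L.length) = ⟨b.val, hlt b⟩ :=
      (List.nodup_iff_injective_get.mp hnodup) hab
    have h3 : a.val = b.val := congrArg Fin.val h2
    exact ZMod.val_injective n h3
  let σ : Equiv.Perm (ZMod n) := Equiv.ofBijective g (Finite.injective_iff_bijective.mp hginj)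
  have key : ∀ s l : ℕ, s + l ≤ n → ∀ T : Finset (ZMod n),
      ((L.drop s).take l).toFinset = T → IsArc σ T := by
    intro s l hsl T hT
    refine ⟨(s : ZMod n), l, ?_⟩
    ext x
    rw [← hT]
    simp only [Finset.mem_image, Finset.mem_range, List.mem_toFinset]
    have hσ : ∀ k : ℕ, (hk : k < l) → σ ((s : ZMod n) + (k : ZMod n)) =
        L.get ⟨s + k, by omega⟩ := by
      intro k hk
      have hcast : ((s : ZMod n) + (k : ZMod n)) = ((s + k : ℕ) : ZMod n) := by
        push_cast; ring
      have hval : ((s + k : ℕ) : ZMod n).val = s + k := by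
        apply ZMod.val_cast_of_lt; omega
      show g ((s : ZMod n) + (k : ZMod n)) = _
      rw [hcast]
      simp only [g]
      congr 1
      exact Fin.ext hval
    constructor
    · intro hx
      obtain ⟨k, hk, hxk⟩ := List.mem_iff_getElem.mp hx
      have hklen : k < l := by
        have := hk
        rw [List.length_take, List.length_drop, hlen] at this
        omega
      refine ⟨k, hklen, ?_⟩
      rw [hσ k hklen]
      rw [List.getElem_take, List.getElem_drop] at hxk
      simpa [List.get_eq_getElem] using hxk
    · rintro ⟨k, hk, rfl⟩
      rw [hσ k hk]
      apply List.mem_iff_getElem.mpr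
      refine ⟨k, ?_, ?_⟩
      · rw [List.length_take, List.length_drop, hlen]; omega
      · rw [List.getElem_take, List.getElem_drop]
        simp [List.get_eq_getElem]
  refine ⟨σ, Or.inl ?_, Or.inr ?_⟩
  · apply key 0 (B1.card + B2.card) (by omega)
    have hdt : (L.drop 0).take (B1.card + B2.card) = B1.toList ++ B2.toList := by
      rw [List.drop_zero, hL, ← List.append_assoc]
      apply List.take_left'
      simp [Finset.length_toList]
    rw [hdt]
    simp only [List.toFinset_append, Finset.toList_toFinset]
    rw [hB1, hB2]
    ext x
    simp only [Finset.mem_union, Finset.mem_inter, Finset.mem_sdiff]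
    tauto
  · apply key B1.card (B2.card + B3.card) (by omega)
    have hd : L.drop B1.card = B2.toList ++ (B3.toList ++ B4.toList) := by
      rw [hL]
      apply List.drop_left'
      simp [Finset.length_toList]
    have hdt : (L.drop B1.card).take (B2.card + B3.card) = B2.toList ++ B3.toList := by
      rw [hd, ← List.append_assoc]
      apply List.take_left'
      simp [Finset.length_toList]
    rw [hdt]
    simp only [List.toFinset_append, Finset.toList_toFinset]
    rw [hB2, hB3]
    ext x
    simp only [Finset.mem_union, Finset.mem_compl, Finset.mem_sdiff]
    tauto
end

section
/- The number of maximal circular split systems over a set of cardinality n ≥ 4 equals (n-1)!/2, i.e., circular orderings of X up to rotation and reflection are in bijection with maximal circular split systems. -/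
set_option linter.unusedSectionVars false
namespace CircAux
open Finset

variable {n : ℕ} [NeZero n]

def R (i : ZMod n) (l : ℕ) : Finset (ZMod n) :=
  (Finset.range l).image fun k : ℕ => i + (k : ZMod n)

lemma arc_iff (σ : Equiv.Perm (ZMod n)) (A : Finset (ZMod n)) :
    IsArc σ A ↔ ∃ i l, A = (R i l).image σ := by
  unfold IsArc R
  simp only [Finset.image_image]
  rfl

lemma R_card (i : ZMod n) {l : ℕ} (hl : l ≤ n) : (R i l).card = l := by
  rw [R, Finset.card_image_of_injOn, Finset.card_range]
  intro a ha b hb hab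
  simp only [Finset.coe_range, Set.mem_Iio] at ha hb
  have h1 : (a : ZMod n) = b := by exact add_left_cancel hab
  have := congrArg ZMod.val h1
  rwa [ZMod.val_cast_of_lt (lt_of_lt_of_le ha hl),
    ZMod.val_cast_of_lt (lt_of_lt_of_le hb hl)] at this

lemma R_mono (i : ZMod n) {l l' : ℕ} (h : l ≤ l') : R i l ⊆ R i l' :=
  Finset.image_subset_image (Finset.range_subset_range.mpr h)

lemma R_n (i : ZMod n) : R i n = Finset.univ := by
  apply Finset.eq_univ_of_card
  rw [R_card i le_rfl, ZMod.card]

lemma R_union (i : ZMod n) {l : ℕ} (hl : l ≤ n) :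
    R i l ∪ R (i + (l : ZMod n)) (n - l) = Finset.univ := by
  apply Finset.eq_univ_of_forall
  intro x
  have hx : x ∈ R i n := by rw [R_n]; exact Finset.mem_univ x
  rw [R, Finset.mem_image] at hx
  obtain ⟨k, hk, rfl⟩ := hx
  rw [Finset.mem_range] at hk
  rcases lt_or_ge k l with h | h
  · exact Finset.mem_union_left _ (by rw [R, Finset.mem_image]; exact ⟨k, Finset.mem_range.mpr h, rfl⟩)
  · refine Finset.mem_union_right _ ?_
    rw [R, Finset.mem_image]
    refine ⟨k - l, Finset.mem_range.mpr (by omega), ?_⟩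
    rw [add_assoc, ← Nat.cast_add]
    congr 2
    omega

lemma R_compl (i : ZMod n) {l : ℕ} (hl : l ≤ n) :
    (R i l)ᶜ = R (i + (l : ZMod n)) (n - l) := by
  have hu := R_union i hl
  have hdisj : Disjoint (R i l) (R (i + (l : ZMod n)) (n - l)) := by
    rw [Finset.disjoint_iff_inter_eq_empty, ← Finset.card_eq_zero]
    have h2 := Finset.card_union_add_card_inter (R i l) (R (i + (l : ZMod n)) (n - l))
    rw [hu, R_card i hl, R_card _ (Nat.sub_le n l), Finset.card_univ, ZMod.card] at h2
    omega
  have : IsCompl (R i l) (R (i + (l : ZMod n)) (n - l)) :=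
    ⟨hdisj, codisjoint_iff.mpr (by rw [Finset.sup_eq_union, hu, Finset.top_eq_univ])⟩
  exact this.compl_eq

lemma image_perm_compl (σ : Equiv.Perm (ZMod n)) (S : Finset (ZMod n)) :
    (S.image σ)ᶜ = Sᶜ.image σ := by
  ext x
  simp only [Finset.mem_compl, Finset.mem_image]
  constructor
  · intro h
    exact ⟨σ⁻¹ x, fun hc => h ⟨σ⁻¹ x, hc, by simp⟩, by simp⟩
  · rintro ⟨y, hy, rfl⟩ ⟨z, hz, hzy⟩
    exact hy (by rwa [σ.injective hzy] at hz)

lemma isArc_compl {σ : Equiv.Perm (ZMod n)} {A : Finset (ZMod n)}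
    (h : IsArc σ A) (hA : A ≠ Finset.univ) : IsArc σ Aᶜ := by
  rw [arc_iff] at h ⊢
  obtain ⟨i, l, rfl⟩ := h
  rcases le_or_gt l n with hl | hl
  · exact ⟨i + (l : ZMod n), n - l, by rw [image_perm_compl, R_compl i hl]⟩
  · exfalso
    apply hA
    have h1 : R i l = Finset.univ :=
      Finset.eq_univ_of_forall fun x => R_mono i hl.le (by rw [R_n]; exact Finset.mem_univ x)
    rw [h1]
    apply Finset.eq_univ_of_card
    rw [Finset.card_image_of_injective _ σ.injective, Finset.card_univ]

lemma arc_card_two {σ : Equiv.Perm (ZMod n)} (hn : 4 ≤ n) {A : Finset (ZMod n)}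
    (h : IsArc σ A) (hA : A.card = 2) : ∃ j, A = {σ j, σ (j + 1)} := by
  rw [arc_iff] at h
  obtain ⟨i, l, rfl⟩ := h
  rw [Finset.card_image_of_injective _ σ.injective] at hA
  rcases le_or_gt l n with hl | hl
  · rw [R_card i hl] at hA
    subst hA
    refine ⟨i, ?_⟩
    have h2 : R i 2 = {i, i + 1} := by
      rw [R]
      rw [show Finset.range 2 = {0, 1} from rfl]
      simp
    rw [h2]
    simp [Finset.image_insert]
  · exfalso
    have h1 : R i l = Finset.univ :=
      Finset.eq_univ_of_forall fun x => R_mono i hl.le (by rw [R_n]; exact Finset.mem_univ x)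
    rw [h1, Finset.card_univ, ZMod.card] at hA
    omega

lemma pair_isArc (τ : Equiv.Perm (ZMod n)) (i : ZMod n) :
    IsArc τ {τ i, τ (i + 1)} := by
  refine ⟨i, 2, ?_⟩
  rw [show Finset.range 2 = {0, 1} from rfl]
  simp

lemma arc_rot {σ τ : Equiv.Perm (ZMod n)} {c : ZMod n} (h : ∀ x, τ x = σ (c + x))
    {A : Finset (ZMod n)} (hA : IsArc τ A) : IsArc σ A := by
  obtain ⟨i, l, rfl⟩ := hA
  exact ⟨c + i, l, Finset.image_congr fun k _ => by rw [h, add_assoc]⟩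

lemma arc_refl {σ τ : Equiv.Perm (ZMod n)} {c : ZMod n} (h : ∀ x, τ x = σ (c - x))
    {A : Finset (ZMod n)} (hA : IsArc τ A) : IsArc σ A := by
  obtain ⟨i, l, rfl⟩ := hA
  refine ⟨c - i - ((l - 1 : ℕ) : ZMod n), l, ?_⟩
  have cast_eq : ∀ k : ℕ, k < l → ((l - 1 - k : ℕ) : ZMod n) = ((l - 1 : ℕ) : ZMod n) - k := by
    intro k hk
    rw [eq_sub_iff_add_eq, ← Nat.cast_add]
    congr 1
    omega
  ext x
  simp only [Finset.mem_image, Finset.mem_range]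
  constructor
  · rintro ⟨k, hk, rfl⟩
    refine ⟨l - 1 - k, by omega, ?_⟩
    rw [h]
    congr 1
    rw [cast_eq _ (by omega)]
    ring
  · rintro ⟨k, hk, rfl⟩
    refine ⟨l - 1 - k, by omega, ?_⟩
    rw [h, cast_eq _ (by omega)]
    congr 1
    ring
lemma arcs_iff_rot {σ τ : Equiv.Perm (ZMod n)} {c : ZMod n} (h : ∀ x, τ x = σ (c + x))
    (A : Finset (ZMod n)) : IsArc τ A ↔ IsArc σ A := by
  constructor
  · exact arc_rot h
  · refine arc_rot (σ := τ) (τ := σ) (c := -c) (fun x => ?_)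
    rw [h]
    congr 1
    ring

lemma arcs_iff_refl {σ τ : Equiv.Perm (ZMod n)} {c : ZMod n} (h : ∀ x, τ x = σ (c - x))
    (A : Finset (ZMod n)) : IsArc τ A ↔ IsArc σ A := by
  constructor
  · exact arc_refl h
  · refine arc_refl (σ := τ) (τ := σ) (c := c) (fun x => ?_)
    rw [h]
    congr 1
    ring

lemma sys_eq_of_rel {σ τ : Equiv.Perm (ZMod n)}
    (h : ∃ c, (∀ x, τ x = σ (c + x)) ∨ (∀ x, τ x = σ (c - x))) :
    {P | IsCircSplit τ P} = {P | IsCircSplit σ P} := by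
  obtain ⟨c, h | h⟩ := h
  · ext P
    simp only [Set.mem_setOf_eq, IsCircSplit, arcs_iff_rot h]
  · ext P
    simp only [Set.mem_setOf_eq, IsCircSplit, arcs_iff_refl h]

lemma one_ne_zero' (hn : 4 ≤ n) : (1 : ZMod n) ≠ 0 := by
  haveI : Fact (1 < n) := ⟨by omega⟩
  exact one_ne_zero

lemma two_ne_zero' (hn : 4 ≤ n) : (2 : ZMod n) ≠ 0 := by
  have h2 : ((2 : ℕ) : ZMod n) = (2 : ZMod n) := by push_cast; rfl
  rw [← h2]
  intro h
  rw [ZMod.natCast_eq_zero_iff] at h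
  have := Nat.le_of_dvd (by norm_num) h
  omega

lemma pair_step (hn : 4 ≤ n) {σ τ : Equiv.Perm (ZMod n)}
    (hF : {P | IsCircSplit τ P} = {P | IsCircSplit σ P}) (i : ZMod n) :
    ∃ j, ({τ i, τ (i + 1)} : Finset (ZMod n)) = {σ j, σ (j + 1)} := by
  have hii : i ≠ i + 1 := by
    intro h
    exact one_ne_zero' hn (by rwa [left_eq_add] at h)
  have hne : τ i ≠ τ (i + 1) := fun h => hii (τ.injective h)
  set A : Finset (ZMod n) := {τ i, τ (i + 1)} with hAdef
  have hcard : A.card = 2 := Finset.card_pair hne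
  have hccard : Aᶜ.card = n - 2 := by
    rw [Finset.card_compl, hcard, ZMod.card]
  have hsplitτ : IsCircSplit τ {A, Aᶜ} :=
    ⟨A, rfl, by omega, by omega, Or.inl (pair_isArc τ i)⟩
  have hsplitσ : IsCircSplit σ {A, Aᶜ} := by
    rw [Set.ext_iff] at hF
    exact (hF _).mp hsplitτ
  obtain ⟨B, hPB, _, _, hB⟩ := hsplitσ
  have hAmem : A ∈ ({B, Bᶜ} : Finset (Finset (ZMod n))) := by
    rw [← hPB]; exact Finset.mem_insert_self _ _
  have hAcne : Aᶜ ≠ Finset.univ := by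
    intro h
    have hA0 : A = ∅ := by
      have h2 := congrArg compl h
      rwa [compl_compl, Finset.compl_univ] at h2
    rw [hA0] at hcard
    simp at hcard
  have hAorC : IsArc σ A ∨ IsArc σ Aᶜ := by
    rw [Finset.mem_insert, Finset.mem_singleton] at hAmem
    rcases hAmem with rfl | h
    · exact hB
    · rcases hB with hb | hb
      · right
        have hBc : B = Aᶜ := by rw [h, compl_compl]
        rwa [hBc] at hb
      · left
        rwa [← h] at hb
  have hArcA : IsArc σ A := by
    rcases hAorC with h | h
    · exact h
    · have := isArc_compl h hAcne
      rwa [compl_compl] at this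
  exact arc_card_two hn hArcA hcard
lemma rel_of_sys_eq (hn : 4 ≤ n) {σ τ : Equiv.Perm (ZMod n)}
    (hF : {P | IsCircSplit τ P} = {P | IsCircSplit σ P}) :
    ∃ c, (∀ x, τ x = σ (c + x)) ∨ (∀ x, τ x = σ (c - x)) := by
  set g : Equiv.Perm (ZMod n) := σ⁻¹ * τ with hg
  have hτ : ∀ x, τ x = σ (g x) := by
    intro x
    simp [hg, Equiv.Perm.mul_apply]
  have hgstep : ∀ i : ZMod n, g (i + 1) = g i + 1 ∨ g (i + 1) = g i - 1 := by
    intro i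
    obtain ⟨j, hj⟩ := pair_step hn hF i
    have h1 : τ i = σ j ∨ τ i = σ (j + 1) := by
      have : τ i ∈ ({σ j, σ (j + 1)} : Finset (ZMod n)) := by
        rw [← hj]; exact Finset.mem_insert_self _ _
      simpa using this
    have h2 : τ (i + 1) = σ j ∨ τ (i + 1) = σ (j + 1) := by
      have : τ (i + 1) ∈ ({σ j, σ (j + 1)} : Finset (ZMod n)) := by
        rw [← hj]; exact Finset.mem_insert_of_mem (Finset.mem_singleton_self _)
      simpa using this
    have hii : i ≠ i + 1 := by
      intro h
      exact one_ne_zero' hn (by rwa [left_eq_add] at h)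
    have hne : τ i ≠ τ (i + 1) := fun h => hii (τ.injective h)
    have hga : ∀ y, τ i = σ y → g i = y := by
      intro y hy
      simp [hg, Equiv.Perm.mul_apply, hy]
    have hgb : ∀ y, τ (i + 1) = σ y → g (i + 1) = y := by
      intro y hy
      simp [hg, Equiv.Perm.mul_apply, hy]
    rcases h1 with h1 | h1 <;> rcases h2 with h2 | h2
    · exact absurd (h1.trans h2.symm) hne
    · left; rw [hga _ h1, hgb _ h2]
    · right; rw [hga _ h1, hgb _ h2]; ring
    · exact absurd (h1.trans h2.symm) hne
  have h2ne := two_ne_zero' hn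
  have hsign : (∀ i, g (i + 1) = g i + 1) ∨ (∀ i, g (i + 1) = g i - 1) := by
    have hcast : ∀ i : ZMod n, ((i.val : ZMod n)) = i := ZMod.natCast_rightInverse
    rcases hgstep 0 with h0 | h0
    · left
      have hnat : ∀ k : ℕ, g ((k : ZMod n) + 1) = g (k : ZMod n) + 1 := by
        intro k
        induction k with
        | zero => simpa using h0
        | succ m ih =>
          rcases hgstep ((m : ZMod n) + 1) with h | h
          · push_cast
            exact h
          · exfalso
            have heq : g ((m : ZMod n) + 1 + 1) = g (m : ZMod n) := by rw [h, ih]; ring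
            have h3 := g.injective heq
            apply h2ne
            have h4 : (m : ZMod n) + 2 = (m : ZMod n) := by linear_combination h3
            rwa [add_eq_left] at h4
      intro i
      have := hnat i.val
      rwa [hcast] at this
    · right
      have hnat : ∀ k : ℕ, g ((k : ZMod n) + 1) = g (k : ZMod n) - 1 := by
        intro k
        induction k with
        | zero => simpa using h0
        | succ m ih =>
          rcases hgstep ((m : ZMod n) + 1) with h | h
          · exfalso
            have heq : g ((m : ZMod n) + 1 + 1) = g (m : ZMod n) := by rw [h, ih]; ring
            have h3 := g.injective heq
            apply h2ne
            have h4 : (m : ZMod n) + 2 = (m : ZMod n) := by linear_combination h3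
            rwa [add_eq_left] at h4
          · push_cast
            exact h
      intro i
      have := hnat i.val
      rwa [hcast] at this
  have hcast : ∀ i : ZMod n, ((i.val : ZMod n)) = i := ZMod.natCast_rightInverse
  rcases hsign with hs | hs
  · refine ⟨g 0, Or.inl fun x => ?_⟩
    have hk : ∀ k : ℕ, g (k : ZMod n) = g 0 + k := by
      intro k
      induction k with
      | zero => simp
      | succ m ih =>
        push_cast
        rw [← add_assoc, ← ih, hs]
    rw [hτ]
    congr 1
    have := hk x.val
    rwa [hcast] at this
  · refine ⟨g 0, Or.inr fun x => ?_⟩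
    have hk : ∀ k : ℕ, g (k : ZMod n) = g 0 - k := by
      intro k
      induction k with
      | zero => simp
      | succ m ih =>
        push_cast
        rw [sub_add_eq_sub_sub, ← ih, hs]
    rw [hτ]
    congr 1
    have := hk x.val
    rwa [hcast] at this

lemma key (hn : 4 ≤ n) (σ τ : Equiv.Perm (ZMod n)) :
    {P | IsCircSplit τ P} = {P | IsCircSplit σ P} ↔
      ∃ c, (∀ x, τ x = σ (c + x)) ∨ (∀ x, τ x = σ (c - x)) :=
  ⟨rel_of_sys_eq hn, sys_eq_of_rel⟩
open scoped Classical in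
noncomputable def Dset (n : ℕ) [NeZero n] : Finset (Equiv.Perm (ZMod n)) :=
  (Finset.univ.image fun c : ZMod n => (Equiv.addLeft c : Equiv.Perm (ZMod n))) ∪
    (Finset.univ.image fun c : ZMod n =>
      ((Equiv.neg (ZMod n)).trans (Equiv.addLeft c) : Equiv.Perm (ZMod n)))

lemma rotP_apply (c x : ZMod n) : (Equiv.addLeft c : Equiv.Perm (ZMod n)) x = c + x := rfl

lemma reflP_apply (c x : ZMod n) :
    ((Equiv.neg (ZMod n)).trans (Equiv.addLeft c) : Equiv.Perm (ZMod n)) x = c - x := by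
  simp [Equiv.trans_apply, sub_eq_add_neg]

lemma Dset_card (hn : 4 ≤ n) : (Dset n).card = 2 * n := by
  classical
  have hrot : Function.Injective fun c : ZMod n => (Equiv.addLeft c : Equiv.Perm (ZMod n)) := by
    intro a b hab
    have := DFunLike.congr_fun hab 0
    simpa [rotP_apply] using this
  have hrefl : Function.Injective fun c : ZMod n =>
      ((Equiv.neg (ZMod n)).trans (Equiv.addLeft c) : Equiv.Perm (ZMod n)) := by
    intro a b hab
    have := DFunLike.congr_fun hab 0
    simpa [reflP_apply] using this
  have hdisj : Disjoint
      (Finset.univ.image fun c : ZMod n => (Equiv.addLeft c : Equiv.Perm (ZMod n)))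
      (Finset.univ.image fun c : ZMod n =>
        ((Equiv.neg (ZMod n)).trans (Equiv.addLeft c) : Equiv.Perm (ZMod n))) := by
    rw [Finset.disjoint_left]
    rintro e he1 he2
    rw [Finset.mem_image] at he1 he2
    obtain ⟨c, _, rfl⟩ := he1
    obtain ⟨c', _, hc'⟩ := he2
    have h0 := DFunLike.congr_fun hc' 0
    have h1 := DFunLike.congr_fun hc' 1
    simp only [rotP_apply, reflP_apply] at h0 h1
    rw [sub_zero] at h0
    rw [add_zero] at h0
    subst h0
    apply two_ne_zero' hn
    linear_combination -h1
  rw [Dset, Finset.card_union_of_disjoint hdisj,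
    Finset.card_image_of_injective _ hrot, Finset.card_image_of_injective _ hrefl,
    Finset.card_univ, ZMod.card]
  ring

open scoped Classical in
lemma fiber_eq (hn : 4 ≤ n) (σ : Equiv.Perm (ZMod n)) :
    (Finset.univ.filter fun τ : Equiv.Perm (ZMod n) =>
        {P | IsCircSplit τ P} = {P | IsCircSplit σ P})
      = (Dset n).image (fun d => σ * d) := by
  ext τ
  rw [Finset.mem_filter, Finset.mem_image]
  simp only [Finset.mem_univ, true_and]
  rw [key hn σ τ]
  constructor
  · rintro ⟨c, h | h⟩
    · refine ⟨Equiv.addLeft c, ?_, ?_⟩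
      · rw [Dset, Finset.mem_union]
        exact Or.inl (Finset.mem_image_of_mem _ (Finset.mem_univ c))
      · exact Equiv.ext fun x => by rw [Equiv.Perm.mul_apply, rotP_apply, ← h]
    · refine ⟨(Equiv.neg (ZMod n)).trans (Equiv.addLeft c), ?_, ?_⟩
      · rw [Dset, Finset.mem_union]
        exact Or.inr (Finset.mem_image_of_mem _ (Finset.mem_univ c))
      · exact Equiv.ext fun x => by rw [Equiv.Perm.mul_apply, reflP_apply, ← h]
  · rintro ⟨d, hd, rfl⟩
    rw [Dset, Finset.mem_union, Finset.mem_image, Finset.mem_image] at hd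
    rcases hd with ⟨c, _, rfl⟩ | ⟨c, _, rfl⟩
    · exact ⟨c, Or.inl fun x => by rw [Equiv.Perm.mul_apply, rotP_apply]⟩
    · exact ⟨c, Or.inr fun x => by rw [Equiv.Perm.mul_apply, reflP_apply]⟩

end CircAux

/-- The number of maximal circular split systems over a set of cardinality `n ≥ 4`
equals `(n-1)!/2`. -/
theorem stmt6 (n : ℕ) [NeZero n] (hn : 4 ≤ n) :
    {𝒮 : Set (Finset (Finset (ZMod n))) |
      ∃ σ : Equiv.Perm (ZMod n), 𝒮 = {P | IsCircSplit σ P}}.ncard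
      = (n - 1).factorial / 2 := by
  classical
  set F := fun σ : Equiv.Perm (ZMod n) => {P | IsCircSplit σ P} with hF
  have hset : {𝒮 : Set (Finset (Finset (ZMod n))) |
      ∃ σ : Equiv.Perm (ZMod n), 𝒮 = {P | IsCircSplit σ P}}
      = ↑(Finset.univ.image F) := by
    ext s
    simp only [Set.mem_setOf_eq, Finset.coe_image, Finset.coe_univ, Set.image_univ,
      Set.mem_range, hF]
    exact exists_congr fun σ => eq_comm
  rw [hset, Set.ncard_coe_finset]
  have hfib : ∀ σ, (Finset.univ.filter fun τ => F τ = F σ).card = 2 * n := by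
    intro σ
    have h1 : (Finset.univ.filter fun τ => F τ = F σ)
        = (CircAux.Dset n).image (fun d => σ * d) := by
      rw [← CircAux.fiber_eq hn σ]
    rw [h1, Finset.card_image_of_injective _ (mul_right_injective σ), CircAux.Dset_card hn]
  have hsum := Finset.card_eq_sum_card_fiberwise
    (f := F) (s := Finset.univ) (t := Finset.univ.image F)
    (fun x _ => Finset.mem_image_of_mem F (Finset.mem_univ x))
  rw [Finset.card_univ, Fintype.card_perm, ZMod.card] at hsum
  have hsum2 : ∑ b ∈ Finset.univ.image F, (Finset.univ.filter fun τ => F τ = b).card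
      = (Finset.univ.image F).card * (2 * n) := by
    rw [Finset.sum_congr rfl fun b hb => ?_, Finset.sum_const, smul_eq_mul]
    obtain ⟨σ, -, rfl⟩ := Finset.mem_image.mp hb
    exact hfib σ
  rw [hsum2] at hsum
  have hfac : n.factorial = n * (n - 1).factorial := by
    conv_lhs => rw [show n = (n - 1) + 1 by omega]
    rw [Nat.factorial_succ]
    congr 1
    omega
  have h2 : (Finset.univ.image F).card * 2 = (n - 1).factorial := by
    apply Nat.eq_of_mul_eq_mul_right (show 0 < n by omega)
    rw [mul_assoc]
    rw [← hsum, hfac]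
    ring
  omega
end

section
/- A split system 𝒮 of m non-trivial splits of [n] is circular if and only if the associated m×n binary matrix (rows = indicator vectors of blocks not containing 1, so the first column is zero) has the circular ones property for rows; equivalently, if and only if that matrix has the consecutive ones property for rows. -/
/-- A split system (splits given by their blocks not containing `0`) is circular if
some circular ordering realizes every split as an arc/complement cut. -/
def CircularSystem {n : ℕ} [NeZero n] (𝒮 : Finset (Finset (ZMod n))) : Prop :=
  ∃ σ : Equiv.Perm (ZMod n), ∀ A ∈ 𝒮, IsArc σ A ∨ IsArc σ Aᶜ

/-- The `true` entries of the row `v` (columns ordered by `ZMod.val`) are consecutive. -/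
def RowConsecutiveZ {n : ℕ} (v : ZMod n → Bool) : Prop :=
  ∃ a b : ℕ, ∀ j : ZMod n, v j = true ↔ a ≤ j.val ∧ j.val ≤ b

/-- Consecutive ones property for rows. -/
def C1R {n m : ℕ} (M : Fin m → ZMod n → Bool) : Prop :=
  ∃ σ : Equiv.Perm (ZMod n), ∀ i, RowConsecutiveZ fun j => M i (σ j)

/-- Circular ones property for rows. -/
def Circ1R {n m : ℕ} (M : Fin m → ZMod n → Bool) : Prop :=
  ∃ σ : Equiv.Perm (ZMod n), ∀ i,
    (RowConsecutiveZ fun j => M i (σ j)) ∨ (RowConsecutiveZ fun j => !(M i (σ j)))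

section Aux

variable {n : ℕ}

/-- The arc of the identity circular ordering starting at `i` of length `l`. -/
def plainArc (n : ℕ) (i : ZMod n) (l : ℕ) : Finset (ZMod n) :=
  (Finset.range l).image fun k : ℕ => i + (k : ZMod n)

lemma mem_plainArc [NeZero n] {i : ZMod n} {l : ℕ} (hl : l ≤ n) (j : ZMod n) :
    j ∈ plainArc n i l ↔ (j - i).val < l := by
  simp only [plainArc, Finset.mem_image, Finset.mem_range]
  constructor
  · rintro ⟨k, hk, rfl⟩
    have h1 : i + (k : ZMod n) - i = (k : ZMod n) := by ring
    rw [h1, ZMod.val_natCast_of_lt (lt_of_lt_of_le hk hl)]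
    exact hk
  · intro h
    exact ⟨(j - i).val, h, by rw [ZMod.natCast_zmod_val]; ring⟩

lemma plainArc_univ [NeZero n] {i : ZMod n} {l : ℕ} (hl : n ≤ l) :
    plainArc n i l = Finset.univ := by
  ext j
  simp only [plainArc, Finset.mem_image, Finset.mem_range, Finset.mem_univ, iff_true]
  exact ⟨(j - i).val, lt_of_lt_of_le (ZMod.val_lt _) hl,
    by rw [ZMod.natCast_zmod_val]; ring⟩

lemma plainArc_compl [NeZero n] (i : ZMod n) (l : ℕ) :
    ∃ (i' : ZMod n) (l' : ℕ), (plainArc n i l)ᶜ = plainArc n i' l' := by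
  rcases le_or_gt n l with hl | hl
  · refine ⟨0, 0, ?_⟩
    rw [plainArc_univ hl]
    simp [plainArc]
  rcases Nat.eq_zero_or_pos l with rfl | hl0
  · refine ⟨i, n, ?_⟩
    have h0 : plainArc n i 0 = ∅ := by simp [plainArc]
    rw [h0, Finset.compl_empty, plainArc_univ le_rfl]
  refine ⟨i + (l : ZMod n), n - l, ?_⟩
  ext j
  rw [Finset.mem_compl, mem_plainArc hl.le, mem_plainArc (Nat.sub_le n l)]
  have hx : j - (i + (l : ZMod n)) = (j - i) - (l : ZMod n) := by ring
  rw [hx]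
  set x := j - i with hxdef
  have hxn : x.val < n := ZMod.val_lt x
  have hnl : x - (l : ZMod n) = x + ((n - l : ℕ) : ZMod n) := by
    rw [Nat.cast_sub hl.le, ZMod.natCast_self]; ring
  have hm1 : (n - l) % n = n - l := Nat.mod_eq_of_lt (by omega)
  have hv : (x - (l : ZMod n)).val = (x.val + (n - l)) % n := by
    rw [hnl, ZMod.val_add, ZMod.val_natCast, hm1]
  rw [hv]
  rcases le_or_gt l x.val with h | h
  · rw [show x.val + (n - l) = (x.val - l) + n by omega, Nat.add_mod_right,
      Nat.mod_eq_of_lt (by omega)]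
    omega
  · rw [Nat.mod_eq_of_lt (by omega)]
    omega

/-- `B` is a val-interval. -/
def IntervalSet (B : Finset (ZMod n)) : Prop :=
  ∃ a b : ℕ, ∀ j : ZMod n, j ∈ B ↔ a ≤ j.val ∧ j.val ≤ b

/-- `B` is an arc of the identity circular ordering. -/
def ArcSet (B : Finset (ZMod n)) : Prop :=
  ∃ (i : ZMod n) (l : ℕ), B = plainArc n i l

lemma ArcSet.compl [NeZero n] {B : Finset (ZMod n)} (h : ArcSet B) : ArcSet Bᶜ := by
  obtain ⟨i, l, rfl⟩ := h
  exact plainArc_compl i l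

lemma IntervalSet.arcSet [NeZero n] {B : Finset (ZMod n)} (h : IntervalSet B) :
    ArcSet B := by
  obtain ⟨a, b, hab⟩ := h
  by_cases hne : a < n ∧ a ≤ b
  · obtain ⟨han, hab'⟩ := hne
    refine ⟨(a : ZMod n), min b (n - 1) - a + 1, ?_⟩
    ext j
    rw [hab]
    simp only [plainArc, Finset.mem_image, Finset.mem_range]
    constructor
    · rintro ⟨h1, h2⟩
      have hjn : j.val < n := ZMod.val_lt j
      refine ⟨j.val - a, by omega, ?_⟩
      have hc : (a : ZMod n) + ((j.val - a : ℕ) : ZMod n) = ((a + (j.val - a) : ℕ) : ZMod n) := by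
        push_cast; ring
      rw [hc, show a + (j.val - a) = j.val by omega, ZMod.natCast_zmod_val]
    · rintro ⟨k, hk, rfl⟩
      have hc : (a : ZMod n) + (k : ZMod n) = ((a + k : ℕ) : ZMod n) := by push_cast; ring
      have hlt : a + k < n := by omega
      rw [hc, ZMod.val_natCast_of_lt hlt]
      omega
  · refine ⟨0, 0, ?_⟩
    ext j
    rw [hab]
    simp only [plainArc, Finset.range_zero, Finset.image_empty, Finset.notMem_empty, iff_false]
    have := ZMod.val_lt j
    omega

lemma ArcSet.intervalSet [NeZero n] {B : Finset (ZMod n)} (h : ArcSet B)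
    (h0 : (0 : ZMod n) ∉ B) : IntervalSet B := by
  obtain ⟨i, l, rfl⟩ := h
  rcases Nat.eq_zero_or_pos l with rfl | hl0
  · refine ⟨1, 0, fun j => ?_⟩
    simp only [plainArc, Finset.range_zero, Finset.image_empty, Finset.notMem_empty, false_iff]
    omega
  have hln : l ≤ n := by
    by_contra hc
    push_neg at hc
    exact h0 (by rw [plainArc_univ hc.le]; exact Finset.mem_univ 0)
  have key : ∀ k, k < l → i.val + k < n ∧ (i + (k : ZMod n)).val = i.val + k := by
    intro k
    induction k with
    | zero =>
      intro _
      exact ⟨by simpa using ZMod.val_lt i, by simp⟩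
    | succ k ih =>
      intro hk
      obtain ⟨h1, h2⟩ := ih (by omega)
      have hmem : i + ((k + 1 : ℕ) : ZMod n) ∈ plainArc n i l := by
        simp only [plainArc, Finset.mem_image, Finset.mem_range]
        exact ⟨k + 1, hk, rfl⟩
      have hne0 : i + ((k + 1 : ℕ) : ZMod n) ≠ 0 := fun hc => h0 (hc ▸ hmem)
      have hcast : i + ((k + 1 : ℕ) : ZMod n) = ((i.val + (k + 1) : ℕ) : ZMod n) := by
        conv_lhs => rw [← ZMod.natCast_zmod_val i]
        push_cast; ring
      have hlt : i.val + (k + 1) < n := by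
        rcases lt_or_ge (i.val + (k + 1)) n with h | h
        · exact h
        · have heq : i.val + (k + 1) = n := by omega
          exfalso
          exact hne0 (by rw [hcast, heq, ZMod.natCast_self])
      exact ⟨hlt, by rw [hcast, ZMod.val_natCast_of_lt hlt]⟩
  refine ⟨i.val, i.val + (l - 1), fun j => ?_⟩
  simp only [plainArc, Finset.mem_image, Finset.mem_range]
  constructor
  · rintro ⟨k, hk, rfl⟩
    have := (key k hk).2
    omega
  · rintro ⟨h1, h2⟩
    refine ⟨j.val - i.val, by omega, ?_⟩
    have hkey := (key (j.val - i.val) (by omega)).2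
    have hv : (i + ((j.val - i.val : ℕ) : ZMod n)).val = j.val := by omega
    calc i + ((j.val - i.val : ℕ) : ZMod n)
        = (((i + ((j.val - i.val : ℕ) : ZMod n)).val : ℕ) : ZMod n) :=
          (ZMod.natCast_zmod_val _).symm
      _ = ((j.val : ℕ) : ZMod n) := by rw [hv]
      _ = j := ZMod.natCast_zmod_val j

lemma arcSet_image_sub [NeZero n] {B : Finset (ZMod n)} (h : ArcSet B) (p : ZMod n) :
    ArcSet (B.image fun x => x - p) := by
  obtain ⟨i, l, rfl⟩ := h
  refine ⟨i - p, l, ?_⟩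
  unfold plainArc
  rw [Finset.image_image]
  congr 1
  funext k
  simp only [Function.comp_apply]
  ring

lemma mem_image_symm [NeZero n] (σ : Equiv.Perm (ZMod n)) (A : Finset (ZMod n))
    (j : ZMod n) : j ∈ A.image σ.symm ↔ σ j ∈ A := by
  simp [Finset.mem_image, Equiv.symm_apply_eq]

lemma image_symm_compl [NeZero n] (σ : Equiv.Perm (ZMod n)) (A : Finset (ZMod n)) :
    (A.image σ.symm)ᶜ = Aᶜ.image σ.symm := by
  ext j
  rw [Finset.mem_compl, mem_image_symm, mem_image_symm, Finset.mem_compl]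

lemma isArc_iff [NeZero n] (σ : Equiv.Perm (ZMod n)) (A : Finset (ZMod n)) :
    IsArc σ A ↔ ArcSet (A.image σ.symm) := by
  constructor
  · rintro ⟨i, l, rfl⟩
    refine ⟨i, l, ?_⟩
    rw [Finset.image_image]
    unfold plainArc
    congr 1
    funext k
    simp
  · rintro ⟨i, l, hB⟩
    refine ⟨i, l, ?_⟩
    have himg : (A.image σ.symm).image σ = A := by
      rw [Finset.image_image]
      have : (⇑σ ∘ ⇑σ.symm) = id := by funext x; simp
      rw [this, Finset.image_id]
    rw [← himg, hB]
    unfold plainArc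
    rw [Finset.image_image]
    rfl

lemma rc_iff [NeZero n] (σ : Equiv.Perm (ZMod n)) (A : Finset (ZMod n)) :
    RowConsecutiveZ (fun j => decide (σ j ∈ A)) ↔ IntervalSet (A.image σ.symm) := by
  unfold RowConsecutiveZ IntervalSet
  simp only [decide_eq_true_eq, mem_image_symm]

end Aux

/-- A split system of `m` non-trivial splits is circular iff its associated binary
matrix (rows = indicators of the blocks not containing `0`) is Circ1R, equivalently
iff that matrix is C1R. -/
theorem stmt10 (n m : ℕ) [NeZero n] (hn : 4 ≤ n) (𝒮 : Finset (Finset (ZMod n)))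
    (h𝒮 : ∀ A ∈ 𝒮, (0 : ZMod n) ∉ A ∧ 2 ≤ A.card ∧ 2 ≤ Aᶜ.card)
    (hm : 𝒮.card = m) (M : Fin m → ZMod n → Bool)
    (hinj : Function.Injective M)
    (hrows : Finset.univ.image M = 𝒮.image fun A => fun j => decide (j ∈ A)) :
    (CircularSystem 𝒮 ↔ Circ1R M) ∧ (CircularSystem 𝒮 ↔ C1R M) := by
  have hrow1 : ∀ i : Fin m, ∃ A ∈ 𝒮, M i = fun j => decide (j ∈ A) := by
    intro i
    have hmem : M i ∈ Finset.univ.image M :=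
      Finset.mem_image_of_mem M (Finset.mem_univ i)
    rw [hrows] at hmem
    obtain ⟨A, hA, hAe⟩ := Finset.mem_image.mp hmem
    exact ⟨A, hA, hAe.symm⟩
  have hrow2 : ∀ A ∈ 𝒮, ∃ i : Fin m, M i = fun j => decide (j ∈ A) := by
    intro A hA
    have hmem : (fun j => decide (j ∈ A)) ∈ 𝒮.image (fun A => fun j => decide (j ∈ A)) :=
      Finset.mem_image_of_mem _ hA
    rw [← hrows] at hmem
    obtain ⟨i, _, hie⟩ := Finset.mem_image.mp hmem
    exact ⟨i, hie⟩
  have hC : CircularSystem 𝒮 → C1R M := by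
    rintro ⟨σ, hσ⟩
    set p := σ.symm 0 with hp
    set τ : Equiv.Perm (ZMod n) := (Equiv.addRight p).trans σ with hτ
    have hτsymm : ∀ x, τ.symm x = σ.symm x - p := by
      intro x
      rw [Equiv.symm_apply_eq]
      simp [hτ]
    refine ⟨τ, fun i => ?_⟩
    obtain ⟨A, hA, hMi⟩ := hrow1 i
    have hAeq : (fun j => M i (τ j)) = fun j => decide (τ j ∈ A) := by
      funext j; rw [hMi]
    rw [hAeq, rc_iff]
    have himg : A.image τ.symm = (A.image σ.symm).image (fun x => x - p) := by
      rw [show (⇑τ.symm) = ((fun x => x - p) ∘ ⇑σ.symm) from funext fun x => hτsymm x,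
        ← Finset.image_image]
    have harc : ArcSet (A.image σ.symm) := by
      rcases hσ A hA with h | h
      · exact (isArc_iff σ A).mp h
      · have h1 : ArcSet (Aᶜ.image σ.symm) := (isArc_iff σ Aᶜ).mp h
        have h2 : ArcSet ((A.image σ.symm)ᶜ) := by rwa [image_symm_compl]
        have h3 := h2.compl
        rwa [compl_compl] at h3
    refine ArcSet.intervalSet ?_ ?_
    · rw [himg]
      exact arcSet_image_sub harc p
    · rw [mem_image_symm]
      have hτ0 : τ 0 = 0 := by simp [hτ, hp]
      rw [hτ0]
      exact (h𝒮 A hA).1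
  have hCirc : Circ1R M → CircularSystem 𝒮 := by
    rintro ⟨σ, hσ⟩
    refine ⟨σ, fun A hA => ?_⟩
    obtain ⟨i, hMi⟩ := hrow2 A hA
    rcases hσ i with h | h
    · left
      rw [isArc_iff]
      apply IntervalSet.arcSet
      rw [← rc_iff]
      have heq : (fun j => M i (σ j)) = fun j => decide (σ j ∈ A) := by
        funext j; rw [hMi]
      rwa [heq] at h
    · right
      rw [isArc_iff]
      apply IntervalSet.arcSet
      rw [← rc_iff]
      have heq : (fun j => !(M i (σ j))) = fun j => decide (σ j ∈ Aᶜ) := by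
        funext j; rw [hMi]; simp [Finset.mem_compl]
      rwa [heq] at h
  have hC1 : C1R M → Circ1R M := by
    rintro ⟨σ, h⟩
    exact ⟨σ, fun i => Or.inl (h i)⟩
  exact ⟨⟨fun h => hC1 (hC h), hCirc⟩, ⟨hC, fun h => hCirc (hC1 h)⟩⟩
end

section
/- A metric δ on a finite set X of cardinality n ≥ 4 is circular decomposable (a nonnegatively weighted sum of split metrics of a circular split system, allowing trivial splits) if and only if some relabeling of X makes δ satisfy the Kalmanson conditions: max(δ(i,j)+δ(k,l), δ(i,l)+δ(j,k)) ≤ δ(i,k)+δ(j,l) for all 1 ≤ i < j < k < l ≤ n. -/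
/-- The split metric of the split with block `A`. -/
def DeltaZ {n : ℕ} (A : Finset (ZMod n)) (p q : ZMod n) : ℝ :=
  if (p ∈ A ∧ q ∉ A) ∨ (p ∉ A ∧ q ∈ A) then 1 else 0

/-- `δ` is circular decomposable: a positively weighted sum of split metrics of a
circular split system (trivial splits allowed). -/
def CircularDecomposable {n : ℕ} [NeZero n] (δ : ZMod n → ZMod n → ℝ) : Prop :=
  ∃ (𝒞 : Finset (Finset (ZMod n))) (α : Finset (ZMod n) → ℝ)
    (σ : Equiv.Perm (ZMod n)),
    (∀ A ∈ 𝒞, A.Nonempty ∧ Aᶜ.Nonempty) ∧ (∀ A ∈ 𝒞, 0 < α A) ∧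
    (∀ A ∈ 𝒞, IsArc σ A ∨ IsArc σ Aᶜ) ∧
    ∀ p q, δ p q = ∑ A ∈ 𝒞, α A * DeltaZ A p q

/-- Some relabeling `ρ` of the points makes `δ` satisfy the Kalmanson conditions:
`max(δ(i,j)+δ(k,l), δ(i,l)+δ(j,k)) ≤ δ(i,k)+δ(j,l)` for all `i < j < k < l`. -/
def PermutedKalmanson {n : ℕ} (δ : ZMod n → ZMod n → ℝ) : Prop :=
  ∃ ρ : Equiv.Perm (ZMod n), ∀ i j k l : ZMod n,
    i.val < j.val → j.val < k.val → k.val < l.val →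
      δ (ρ i) (ρ j) + δ (ρ k) (ρ l) ≤ δ (ρ i) (ρ k) + δ (ρ j) (ρ l) ∧
      δ (ρ i) (ρ l) + δ (ρ j) (ρ k) ≤ δ (ρ i) (ρ k) + δ (ρ j) (ρ l)

section Aux
variable {n : ℕ} [NeZero n]

def arcSet (s : ZMod n) (m : ℕ) : Finset (ZMod n) :=
  (Finset.range m).image fun k : ℕ => s + (k : ZMod n)

lemma mem_arcSet {m : ℕ} (hm : m ≤ n) {s p : ZMod n} :
    p ∈ arcSet s m ↔ (p - s).val < m := by
  constructor
  · rintro h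
    rcases Finset.mem_image.1 h with ⟨k, hk, rfl⟩
    have hk' : k < m := Finset.mem_range.1 hk
    have : (s + (k : ZMod n) - s) = (k : ZMod n) := by ring
    rw [this, ZMod.val_natCast, Nat.mod_eq_of_lt (lt_of_lt_of_le hk' hm)]
    exact hk'
  · intro h
    refine Finset.mem_image.2 ⟨(p - s).val, Finset.mem_range.2 h, ?_⟩
    rw [ZMod.natCast_zmod_val]
    ring

lemma arcSet_eq_univ {m : ℕ} (hm : n ≤ m) (s : ZMod n) : arcSet s m = Finset.univ := by
  ext p
  simp only [Finset.mem_univ, iff_true]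
  refine Finset.mem_image.2 ⟨(p - s).val, Finset.mem_range.2 (lt_of_lt_of_le (ZMod.val_lt _) hm), ?_⟩
  rw [ZMod.natCast_zmod_val]; ring

lemma val_sub_formula (p s : ZMod n) :
    (p - s).val = if s.val ≤ p.val then p.val - s.val else p.val + n - s.val := by
  have h1 : ((p - s) + s).val = p.val := by rw [sub_add_cancel]
  rw [ZMod.val_add] at h1
  have hz := ZMod.val_lt (p - s)
  have hs := ZMod.val_lt s
  have hp := ZMod.val_lt p
  split_ifs with hc
  · rcases lt_or_ge ((p - s).val + s.val) n with h | h
    · rw [Nat.mod_eq_of_lt h] at h1; omega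
    · rw [Nat.mod_eq_sub_mod h, Nat.mod_eq_of_lt (by omega)] at h1; omega
  · rcases lt_or_ge ((p - s).val + s.val) n with h | h
    · rw [Nat.mod_eq_of_lt h] at h1; omega
    · rw [Nat.mod_eq_sub_mod h, Nat.mod_eq_of_lt (by omega)] at h1; omega

lemma DeltaZ_compl (A : Finset (ZMod n)) (p q : ZMod n) : DeltaZ Aᶜ p q = DeltaZ A p q := by
  unfold DeltaZ
  by_cases hp : p ∈ A <;> by_cases hq : q ∈ A <;> simp [hp, hq]

lemma DeltaZ_image (σ : Equiv.Perm (ZMod n)) (B : Finset (ZMod n)) (p q : ZMod n) :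
    DeltaZ (B.image σ) p q = DeltaZ B (σ.symm p) (σ.symm q) := by
  have hmem : ∀ x : ZMod n, x ∈ B.image σ ↔ σ.symm x ∈ B := by
    intro x
    simp only [Finset.mem_image]
    constructor
    · rintro ⟨a, ha, rfl⟩; simpa using ha
    · intro h; exact ⟨σ.symm x, h, by simp⟩
  simp only [DeltaZ, hmem]

lemma image_compl (σ : Equiv.Perm (ZMod n)) (A : Finset (ZMod n)) :
    (A.image σ)ᶜ = Aᶜ.image σ := by
  ext x
  simp only [Finset.mem_compl, Finset.mem_image]
  constructor
  · intro h
    exact ⟨σ.symm x, fun hc => h ⟨σ.symm x, hc, by simp⟩, by simp⟩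
  · rintro ⟨a, ha, rfl⟩ ⟨b, hb, hba⟩
    exact ha (by rwa [← σ.injective hba])

end Aux

lemma deltaZ_kalmanson {n : ℕ} [NeZero n] (s : ZMod n) (m : ℕ) (hm : m ≤ n)
    {i j k l : ZMod n} (h1 : i.val < j.val) (h2 : j.val < k.val) (h3 : k.val < l.val) :
    DeltaZ (arcSet s m) i j + DeltaZ (arcSet s m) k l
      ≤ DeltaZ (arcSet s m) i k + DeltaZ (arcSet s m) j l ∧
    DeltaZ (arcSet s m) i l + DeltaZ (arcSet s m) j k
      ≤ DeltaZ (arcSet s m) i k + DeltaZ (arcSet s m) j l := by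
  have fi := val_sub_formula i s
  have fj := val_sub_formula j s
  have fk := val_sub_formula k s
  have fl := val_sub_formula l s
  have hiv := ZMod.val_lt i; have hjv := ZMod.val_lt j
  have hkv := ZMod.val_lt k; have hlv := ZMod.val_lt l
  have hsv := ZMod.val_lt s
  have excl1 : ¬(i ∈ arcSet s m ∧ j ∉ arcSet s m ∧ k ∈ arcSet s m ∧ l ∉ arcSet s m) := by
    rw [mem_arcSet hm, mem_arcSet hm, mem_arcSet hm, mem_arcSet hm, fi, fj, fk, fl]
    split_ifs <;> omega
  have excl2 : ¬(i ∉ arcSet s m ∧ j ∈ arcSet s m ∧ k ∉ arcSet s m ∧ l ∈ arcSet s m) := by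
    rw [mem_arcSet hm, mem_arcSet hm, mem_arcSet hm, mem_arcSet hm, fi, fj, fk, fl]
    split_ifs <;> omega
  by_cases Hi : i ∈ arcSet s m <;> by_cases Hj : j ∈ arcSet s m <;>
    by_cases Hk : k ∈ arcSet s m <;> by_cases Hl : l ∈ arcSet s m
  all_goals try (exfalso; apply excl1; exact ⟨Hi, Hj, Hk, Hl⟩)
  all_goals try (exfalso; apply excl2; exact ⟨Hi, Hj, Hk, Hl⟩)
  all_goals (simp only [DeltaZ, Hi, Hj, Hk, Hl]; norm_num)

lemma val_add_nat' {n : ℕ} [NeZero n] (a : ZMod n) {x : ℕ} (hx : x < n) :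
    (a + (x : ℕ)).val = if a.val + x < n then a.val + x else a.val + x - n := by
  have hv := ZMod.val_lt a
  rw [ZMod.val_add, ZMod.val_natCast, Nat.mod_eq_of_lt hx]
  split_ifs with h
  · exact Nat.mod_eq_of_lt h
  · rw [Nat.mod_eq_sub_mod (le_of_not_gt h), Nat.mod_eq_of_lt (by omega)]

lemma cyclicK {n : ℕ} [NeZero n] (d : ZMod n → ZMod n → ℝ)
    (hsymm : ∀ p q, d p q = d q p)
    (K : ∀ i j k l : ZMod n, i.val < j.val → j.val < k.val → k.val < l.val →
      d i j + d k l ≤ d i k + d j l ∧ d i l + d j k ≤ d i k + d j l)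
    (a : ZMod n) {p q r : ℕ} (h0 : 0 < p) (hpq : p < q) (hqr : q < r) (hrn : r < n) :
    d a (a + (r : ℕ)) + d (a + (p : ℕ)) (a + (q : ℕ))
      ≤ d a (a + (q : ℕ)) + d (a + (p : ℕ)) (a + (r : ℕ)) := by
  have hp := val_add_nat' a (show p < n by omega)
  have hq := val_add_nat' a (show q < n by omega)
  have hr := val_add_nat' a hrn
  have hv := ZMod.val_lt a
  by_cases c1 : a.val + r < n
  · have ep : (a + (p : ℕ)).val = a.val + p := by rw [hp, if_pos (by omega)]
    have eq' : (a + (q : ℕ)).val = a.val + q := by rw [hq, if_pos (by omega)]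
    have er : (a + (r : ℕ)).val = a.val + r := by rw [hr, if_pos (by omega)]
    have := K a (a + (p : ℕ)) (a + (q : ℕ)) (a + (r : ℕ))
      (by omega) (by omega) (by omega)
    linarith [this.2]
  · by_cases c2 : a.val + q < n
    · have ep : (a + (p : ℕ)).val = a.val + p := by rw [hp, if_pos (by omega)]
      have eq' : (a + (q : ℕ)).val = a.val + q := by rw [hq, if_pos (by omega)]
      have er : (a + (r : ℕ)).val = a.val + r - n := by rw [hr, if_neg (by omega)]
      have := K (a + (r : ℕ)) a (a + (p : ℕ)) (a + (q : ℕ))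
        (by omega) (by omega) (by omega)
      linarith [this.1, hsymm a (a + (r : ℕ)), hsymm (a + (p : ℕ)) (a + (r : ℕ))]
    · by_cases c3 : a.val + p < n
      · have ep : (a + (p : ℕ)).val = a.val + p := by rw [hp, if_pos (by omega)]
        have eq' : (a + (q : ℕ)).val = a.val + q - n := by rw [hq, if_neg (by omega)]
        have er : (a + (r : ℕ)).val = a.val + r - n := by rw [hr, if_neg (by omega)]
        have := K (a + (q : ℕ)) (a + (r : ℕ)) a (a + (p : ℕ))
          (by omega) (by omega) (by omega)
        linarith [this.2, hsymm a (a + (q : ℕ)), hsymm (a + (p : ℕ)) (a + (q : ℕ)),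
          hsymm a (a + (r : ℕ)), hsymm (a + (p : ℕ)) (a + (r : ℕ))]
      · have ep : (a + (p : ℕ)).val = a.val + p - n := by rw [hp, if_neg (by omega)]
        have eq' : (a + (q : ℕ)).val = a.val + q - n := by rw [hq, if_neg (by omega)]
        have er : (a + (r : ℕ)).val = a.val + r - n := by rw [hr, if_neg (by omega)]
        have := K (a + (p : ℕ)) (a + (q : ℕ)) (a + (r : ℕ)) a
          (by omega) (by omega) (by omega)
        linarith [this.1, hsymm a (a + (r : ℕ)), hsymm a (a + (q : ℕ)),
          hsymm (a + (p : ℕ)) (a + (r : ℕ)), hsymm (a + (p : ℕ)) (a + (q : ℕ))]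

noncomputable def Wgt {n : ℕ} [NeZero n] (d : ZMod n → ZMod n → ℝ) (s : ZMod n) (m : ℕ) : ℝ :=
  d (s - 1) (s + (m : ℕ) - 1) + d s (s + (m : ℕ)) - d (s - 1) (s + (m : ℕ)) - d s (s + (m : ℕ) - 1)

noncomputable def Fd {n : ℕ} [NeZero n] (d : ZMod n → ZMod n → ℝ) (s : ZMod n) (m : ℕ) : ℝ :=
  d s (s + (m : ℕ))

lemma Wgt_split {n : ℕ} [NeZero n] (d : ZMod n → ZMod n → ℝ) (s : ZMod n) {m : ℕ} (hm : 1 ≤ m) :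
    Wgt d s m = (Fd d s m - Fd d s (m - 1)) - (Fd d (s - 1) (m + 1) - Fd d (s - 1) m) := by
  have c1 : ((m - 1 : ℕ) : ZMod n) = (m : ℕ) - 1 := by
    push_cast [Nat.cast_sub hm]; ring
  simp only [Wgt, Fd, c1, Nat.cast_add, Nat.cast_one]
  have e1 : s + ((m : ZMod n) - 1) = s + (m : ℕ) - 1 := by ring
  have e2 : s - 1 + ((m : ZMod n) + 1) = s + (m : ℕ) := by ring
  have e3 : s - 1 + (m : ZMod n) = s + (m : ℕ) - 1 := by ring
  rw [e1, e2, e3]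
  ring

lemma Wgt_nonneg {n : ℕ} [NeZero n] (hn : 4 ≤ n) (d : ZMod n → ZMod n → ℝ)
    (hsymm : ∀ p q, d p q = d q p) (hdiag : ∀ p, d p p = 0)
    (htri : ∀ p q r, d p r ≤ d p q + d q r)
    (K : ∀ i j k l : ZMod n, i.val < j.val → j.val < k.val → k.val < l.val →
      d i j + d k l ≤ d i k + d j l ∧ d i l + d j k ≤ d i k + d j l)
    (s : ZMod n) {m : ℕ} (hm1 : 1 ≤ m) (hm2 : m ≤ n - 1) : 0 ≤ Wgt d s m := by
  rcases eq_or_lt_of_le hm1 with h1 | h1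
  · -- m = 1
    subst h1
    unfold Wgt
    simp only [Nat.cast_one]
    have e : s + 1 - 1 = s := by ring
    rw [e]
    have h := htri (s - 1) s (s + 1)
    have h2 := hdiag s
    linarith
  · rcases eq_or_lt_of_le hm2 with h2 | h2
    · -- m = n - 1
      subst h2
      have c : ((n - 1 : ℕ) : ZMod n) = -1 := by
        push_cast [Nat.cast_sub (show 1 ≤ n by omega)]
        simp [ZMod.natCast_self]
      unfold Wgt
      rw [c]
      have e1 : s + (-1 : ZMod n) - 1 = s - 1 - 1 := by ring
      have e2 : s + (-1 : ZMod n) = s - 1 := by ring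
      rw [e1, e2]
      have h := htri s (s - 1) (s - 1 - 1)
      have h2 := hdiag (s - 1)
      linarith
    · -- 2 ≤ m ≤ n - 2
      have h := cyclicK d hsymm K (s - 1) (p := 1) (q := m) (r := m + 1)
        one_pos (by omega) (by omega) (by omega)
      have e1 : s - 1 + ((1 : ℕ) : ZMod n) = s := by push_cast; ring
      have e2 : s - 1 + ((m : ℕ) : ZMod n) = s + (m : ℕ) - 1 := by ring
      have e3 : s - 1 + ((m + 1 : ℕ) : ZMod n) = s + (m : ℕ) := by push_cast; ring
      rw [e1, e2, e3] at h
      unfold Wgt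
      linarith

lemma tele1 (f : ℕ → ℝ) (u : ℕ) : ∀ v, u ≤ v →
    ∑ m ∈ Finset.Ioc u v, (f m - f (m - 1)) = f v - f u := by
  intro v
  induction v with
  | zero => intro h; interval_cases u; simp
  | succ w ih =>
    intro h
    rcases Nat.lt_or_ge u (w + 1) with h' | h'
    · have hu : u ≤ w := by omega
      rw [Finset.sum_Ioc_succ_top hu, ih hu]
      simp only [Nat.add_sub_cancel]
      ring
    · have : u = w + 1 := by omega
      subst this
      simp
lemma tele2 (f : ℕ → ℝ) (u : ℕ) : ∀ v, u ≤ v →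
    ∑ m ∈ Finset.Ioc u v, (f (m + 1) - f m) = f (v + 1) - f (u + 1) := by
  intro v
  induction v with
  | zero => intro h; interval_cases u; simp
  | succ w ih =>
    intro h
    rcases Nat.lt_or_ge u (w + 1) with h' | h'
    · have hu : u ≤ w := by omega
      rw [Finset.sum_Ioc_succ_top hu, ih hu]
      ring
    · have : u = w + 1 := by omega
      subst this
      simp

lemma oneside {n : ℕ} [NeZero n] (hn : 4 ≤ n) (d : ZMod n → ZMod n → ℝ)
    (hdiag : ∀ p, d p p = 0) {p q : ZMod n} (hpq : p ≠ q) :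
    ∑ x ∈ Finset.univ ×ˢ Finset.Icc 1 (n - 1), Wgt d x.1 x.2 *
      (if p ∈ arcSet x.1 x.2 ∧ q ∉ arcSet x.1 x.2 then (1 : ℝ) else 0)
      = d p q + d q p := by
  set t := (q - p).val with ht
  have htn : t < n := ZMod.val_lt _
  have ht1 : 1 ≤ t := by
    by_contra h
    have h0 : (q - p).val = 0 := by omega
    have := (ZMod.val_eq_zero _).1 h0
    exact hpq (sub_eq_zero.1 this).symm
  rw [Finset.sum_product]
  have inner : ∀ s : ZMod n,
      (∑ m ∈ Finset.Icc 1 (n - 1), Wgt d s m *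
        (if p ∈ arcSet s m ∧ q ∉ arcSet s m then (1 : ℝ) else 0))
      = ∑ m ∈ Finset.Ioc ((p - s).val) ((t + (p - s).val) % n), Wgt d s m := by
    intro s
    have hv : (q - s).val = (t + (p - s).val) % n := by
      have e : q - s = (q - p) + (p - s) := by ring
      rw [e, ZMod.val_add, ht]
    have hvn : (t + (p - s).val) % n < n := Nat.mod_lt _ (by omega)
    rw [← hv]
    simp only [mul_ite, mul_one, mul_zero]
    rw [← Finset.sum_filter]
    congr 1
    ext m
    simp only [Finset.mem_filter, Finset.mem_Icc, Finset.mem_Ioc]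
    constructor
    · rintro ⟨⟨hm1, hm2⟩, hp', hq'⟩
      rw [mem_arcSet (by omega)] at hp' hq'
      exact ⟨hp', by omega⟩
    · rintro ⟨h1, h2⟩
      have hqv := ZMod.val_lt (q - s)
      have hm : m ≤ n := by omega
      refine ⟨⟨by omega, by omega⟩, (mem_arcSet hm).2 h1, ?_⟩
      rw [mem_arcSet hm]; omega
  rw [Finset.sum_congr rfl (fun s _ => inner s)]
  have step2 : (∑ s : ZMod n, ∑ m ∈ Finset.Ioc ((p - s).val) ((t + (p - s).val) % n), Wgt d s m)
      = ∑ u ∈ Finset.range n, ∑ m ∈ Finset.Ioc u ((t + u) % n), Wgt d (p - (u : ℕ)) m := by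
    refine Finset.sum_bij' (fun s _ => (p - s).val) (fun u _ => p - ((u : ℕ) : ZMod n))
      (fun s _ => Finset.mem_range.2 (ZMod.val_lt _)) (fun u _ => Finset.mem_univ _)
      (fun s _ => by rw [ZMod.natCast_zmod_val]; ring)
      (fun u hu => by
        have e : (p - (p - ((u : ℕ) : ZMod n))) = ((u : ℕ) : ZMod n) := by ring
        rw [e, ZMod.val_natCast, Nat.mod_eq_of_lt (Finset.mem_range.1 hu)])
      (fun s _ => by
        have e : p - (((p - s).val : ℕ) : ZMod n) = s := by rw [ZMod.natCast_zmod_val]; ring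
        rw [e])
  rw [step2]
  have step3 : (∑ u ∈ Finset.range n, ∑ m ∈ Finset.Ioc u ((t + u) % n), Wgt d (p - (u : ℕ)) m)
      = ∑ u ∈ Finset.range (n - t), ∑ m ∈ Finset.Ioc u ((t + u) % n), Wgt d (p - (u : ℕ)) m := by
    symm
    apply Finset.sum_subset (Finset.range_subset_range.2 (by omega))
    intro u hu hnu
    rw [Finset.mem_range] at hu hnu
    have h1 : n ≤ t + u := by omega
    have h2 : (t + u) % n = t + u - n := by
      rw [Nat.mod_eq_sub_mod h1, Nat.mod_eq_of_lt (by omega)]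
    rw [h2, Finset.Ioc_eq_empty (by omega), Finset.sum_empty]
  rw [step3]
  have step4 : ∀ u ∈ Finset.range (n - t),
      (∑ m ∈ Finset.Ioc u ((t + u) % n), Wgt d (p - (u : ℕ)) m)
      = ((fun u : ℕ => Fd d (p - (u : ℕ)) (t + u) - Fd d (p - (u : ℕ)) u) u
        - (fun u : ℕ => Fd d (p - (u : ℕ)) (t + u) - Fd d (p - (u : ℕ)) u) (u + 1)) := by
    intro u hu
    have hu' : u < n - t := Finset.mem_range.1 hu
    have hmod : (t + u) % n = t + u := Nat.mod_eq_of_lt (by omega)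
    rw [hmod]
    have hW : ∀ m ∈ Finset.Ioc u (t + u), Wgt d (p - (u : ℕ)) m
        = ((Fd d (p - (u : ℕ)) m - Fd d (p - (u : ℕ)) (m - 1))
          - (Fd d (p - (u : ℕ) - 1) (m + 1) - Fd d (p - (u : ℕ) - 1) m)) := by
      intro m hm
      rw [Finset.mem_Ioc] at hm
      exact Wgt_split d _ (by omega)
    rw [Finset.sum_congr rfl hW, Finset.sum_sub_distrib]
    rw [tele1 (fun m => Fd d (p - (u : ℕ)) m) u (t + u) (by omega)]
    rw [tele2 (fun m => Fd d (p - (u : ℕ) - 1) m) u (t + u) (by omega)]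
    have e : p - (u : ℕ) - 1 = p - ((u + 1 : ℕ) : ZMod n) := by push_cast; ring
    have e2 : t + u + 1 = t + (u + 1) := by ring
    simp only [e, e2]
  rw [Finset.sum_congr rfl step4,
    Finset.sum_range_sub' (fun u : ℕ => Fd d (p - (u : ℕ)) (t + u) - Fd d (p - (u : ℕ)) u) (n - t)]
  have ep0 : p - ((0 : ℕ) : ZMod n) = p := by norm_num
  have ept : p + ((t : ℕ) : ZMod n) = q := by rw [ht, ZMod.natCast_zmod_val]; ring
  have ent : ((n - t : ℕ) : ZMod n) = -((t : ℕ) : ZMod n) := by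
    push_cast [Nat.cast_sub (le_of_lt htn)]
    simp
  have epq : p - ((n - t : ℕ) : ZMod n) = q := by rw [ent]; rw [← ept]; ring
  have f0 : Fd d (p - ((0 : ℕ) : ZMod n)) (t + 0) - Fd d (p - ((0 : ℕ) : ZMod n)) 0
      = d p q := by
    unfold Fd
    rw [ep0, Nat.add_zero, ept]
    norm_num
    exact hdiag p
  have fnt : Fd d (p - ((n - t : ℕ) : ZMod n)) (t + (n - t)) - Fd d (p - ((n - t : ℕ) : ZMod n)) (n - t)
      = - d q p := by
    unfold Fd
    rw [epq]
    have e1 : t + (n - t) = n := by omega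
    rw [e1]
    have e2 : q + ((n : ℕ) : ZMod n) = q := by simp [ZMod.natCast_self]
    have e3 : q + ((n - t : ℕ) : ZMod n) = p := by rw [ent, ← ept]; ring
    rw [e2, e3, hdiag]
    ring
  rw [f0, fnt]
  ring

lemma DeltaZ_eq_add {n : ℕ} (A : Finset (ZMod n)) (p q : ZMod n) :
    DeltaZ A p q = (if p ∈ A ∧ q ∉ A then (1 : ℝ) else 0) + (if q ∈ A ∧ p ∉ A then (1 : ℝ) else 0) := by
  unfold DeltaZ
  by_cases hp : p ∈ A <;> by_cases hq : q ∈ A <;> simp [hp, hq]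

lemma DeltaZ_self {n : ℕ} (A : Finset (ZMod n)) (p : ZMod n) : DeltaZ A p p = 0 := by
  unfold DeltaZ
  by_cases hp : p ∈ A <;> simp [hp]

lemma key {n : ℕ} [NeZero n] (hn : 4 ≤ n) (d : ZMod n → ZMod n → ℝ)
    (hsymm : ∀ p q, d p q = d q p) (hdiag : ∀ p, d p p = 0) (p q : ZMod n) :
    ∑ x ∈ Finset.univ ×ˢ Finset.Icc 1 (n - 1),
      Wgt d x.1 x.2 * DeltaZ (arcSet x.1 x.2) p q = 4 * d p q := by
  by_cases hpq : p = q
  · subst hpq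
    simp only [DeltaZ_self, mul_zero, Finset.sum_const_zero, hdiag, mul_zero]
  · have h1 := oneside hn d hdiag hpq
    have h2 := oneside hn d hdiag (Ne.symm hpq)
    calc ∑ x ∈ Finset.univ ×ˢ Finset.Icc 1 (n - 1),
        Wgt d x.1 x.2 * DeltaZ (arcSet x.1 x.2) p q
        = ∑ x ∈ Finset.univ ×ˢ Finset.Icc 1 (n - 1),
          (Wgt d x.1 x.2 * (if p ∈ arcSet x.1 x.2 ∧ q ∉ arcSet x.1 x.2 then (1:ℝ) else 0)
          + Wgt d x.1 x.2 * (if q ∈ arcSet x.1 x.2 ∧ p ∉ arcSet x.1 x.2 then (1:ℝ) else 0)) := by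
            refine Finset.sum_congr rfl fun x _ => ?_
            rw [DeltaZ_eq_add, mul_add]
      _ = (d p q + d q p) + (d q p + d p q) := by
            rw [Finset.sum_add_distrib, h1, h2]
      _ = 4 * d p q := by rw [hsymm q p]; ring

lemma backward_dir {n : ℕ} [NeZero n] (hn : 4 ≤ n) (δ : ZMod n → ZMod n → ℝ)
    (hsymm : ∀ p q, δ p q = δ q p) (hdiag : ∀ p, δ p p = 0)
    (htri : ∀ p q r, δ p r ≤ δ p q + δ q r) (h : PermutedKalmanson δ) :
    CircularDecomposable δ := by
  obtain ⟨ρ, K⟩ := h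
  set d : ZMod n → ZMod n → ℝ := fun i j => δ (ρ i) (ρ j) with hd
  have dsymm : ∀ p q, d p q = d q p := fun p q => hsymm _ _
  have ddiag : ∀ p, d p p = 0 := fun p => hdiag _
  have dtri : ∀ p q r, d p r ≤ d p q + d q r := fun p q r => htri _ _ _
  have himg : ∀ A : Finset (ZMod n), (A.image ⇑ρ).image ⇑ρ.symm = A := by
    intro A
    rw [Finset.image_image]
    simp
  set I' : Finset (ZMod n × ℕ) :=
    (Finset.univ ×ˢ Finset.Icc 1 (n - 1)).filter (fun x : ZMod n × ℕ => 0 < Wgt d x.1 x.2)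
    with hI'
  have hbounds : ∀ x : ZMod n × ℕ, x ∈ I' → 1 ≤ x.2 ∧ x.2 ≤ n - 1 := by
    intro x hx
    have := (Finset.mem_product.1 (Finset.mem_filter.1 hx).1).2
    rw [Finset.mem_Icc] at this
    exact this
  refine ⟨(I'.image (fun x => arcSet x.1 x.2)).image (Finset.image ⇑ρ),
    fun B => (∑ x ∈ I'.filter (fun y => arcSet y.1 y.2 = B.image ⇑ρ.symm), Wgt d x.1 x.2) / 4,
    ρ, ?_, ?_, ?_, ?_⟩
  · -- nonempty
    intro B hB
    obtain ⟨A, hA, rfl⟩ := Finset.mem_image.1 hB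
    obtain ⟨x, hx, rfl⟩ := Finset.mem_image.1 hA
    obtain ⟨hx1, hx2⟩ := hbounds x hx
    have hself : x.1 ∈ arcSet x.1 x.2 := by
      rw [mem_arcSet (by omega)]
      simp only [sub_self, ZMod.val_zero]
      omega
    have hout : x.1 + (x.2 : ZMod n) ∉ arcSet x.1 x.2 := by
      rw [mem_arcSet (by omega)]
      have e : x.1 + (x.2 : ZMod n) - x.1 = (x.2 : ZMod n) := by ring
      rw [e, ZMod.val_natCast, Nat.mod_eq_of_lt (by omega)]
      omega
    constructor
    · exact ⟨ρ x.1, Finset.mem_image_of_mem _ hself⟩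
    · rw [image_compl]
      exact ⟨ρ (x.1 + (x.2 : ZMod n)), Finset.mem_image_of_mem _ (Finset.mem_compl.2 hout)⟩
  · -- positivity
    intro B hB
    obtain ⟨A, hA, rfl⟩ := Finset.mem_image.1 hB
    obtain ⟨x, hx, rfl⟩ := Finset.mem_image.1 hA
    dsimp only
    rw [himg]
    apply div_pos _ (by norm_num)
    apply Finset.sum_pos
    · intro y hy
      exact (Finset.mem_filter.1 ((Finset.mem_filter.1 hy).1)).2
    · exact ⟨x, Finset.mem_filter.2 ⟨hx, rfl⟩⟩
  · -- arcs
    intro B hB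
    obtain ⟨A, hA, rfl⟩ := Finset.mem_image.1 hB
    obtain ⟨x, hx, rfl⟩ := Finset.mem_image.1 hA
    left
    refine ⟨x.1, x.2, ?_⟩
    unfold arcSet
    rw [Finset.image_image]
    rfl
  · -- sum identity
    intro p q
    rw [Finset.sum_image (by
      intro A hA A' hA' hEq
      have := congrArg (Finset.image ⇑ρ.symm) hEq
      rwa [himg, himg] at this)]
    have congr1 : ∀ A ∈ I'.image (fun x => arcSet x.1 x.2),
        (∑ x ∈ I'.filter (fun y => arcSet y.1 y.2 = (A.image ⇑ρ).image ⇑ρ.symm), Wgt d x.1 x.2) / 4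
          * DeltaZ (A.image ⇑ρ) p q
        = (∑ x ∈ I'.filter (fun y => arcSet y.1 y.2 = A), Wgt d x.1 x.2) / 4
          * DeltaZ A (ρ.symm p) (ρ.symm q) := by
      intro A hA
      rw [himg, DeltaZ_image]
    rw [Finset.sum_congr rfl congr1]
    have hδ : δ p q = d (ρ.symm p) (ρ.symm q) := by simp [hd]
    rw [hδ]
    rw [Finset.sum_image' (fun x => Wgt d x.1 x.2 / 4 * DeltaZ (arcSet x.1 x.2) (ρ.symm p) (ρ.symm q))
      (by
        intro c hc
        have congr2 : ∀ x ∈ I'.filter (fun y => arcSet y.1 y.2 = arcSet c.1 c.2),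
            Wgt d x.1 x.2 / 4 * DeltaZ (arcSet x.1 x.2) (ρ.symm p) (ρ.symm q)
            = Wgt d x.1 x.2 / 4 * DeltaZ (arcSet c.1 c.2) (ρ.symm p) (ρ.symm q) := by
          intro x hx
          rw [(Finset.mem_filter.1 hx).2]
        rw [Finset.sum_congr rfl congr2, ← Finset.sum_mul, ← Finset.sum_div])]
    have ext : ∑ x ∈ I', Wgt d x.1 x.2 / 4 * DeltaZ (arcSet x.1 x.2) (ρ.symm p) (ρ.symm q)
        = ∑ x ∈ Finset.univ ×ˢ Finset.Icc 1 (n - 1),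
            Wgt d x.1 x.2 / 4 * DeltaZ (arcSet x.1 x.2) (ρ.symm p) (ρ.symm q) := by
      apply Finset.sum_subset (Finset.filter_subset _ _)
      intro x hx hnx
      have h0 : ¬ 0 < Wgt d x.1 x.2 := fun hc => hnx (Finset.mem_filter.2 ⟨hx, hc⟩)
      have hb := (Finset.mem_product.1 hx).2
      rw [Finset.mem_Icc] at hb
      have hnn := Wgt_nonneg hn d dsymm ddiag dtri K x.1 hb.1 hb.2
      have : Wgt d x.1 x.2 = 0 := le_antisymm (not_lt.1 h0) hnn
      rw [this]
      ring
    rw [ext]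
    have k := key hn d dsymm ddiag (ρ.symm p) (ρ.symm q)
    have e : ∑ x ∈ Finset.univ ×ˢ Finset.Icc 1 (n - 1),
        Wgt d x.1 x.2 / 4 * DeltaZ (arcSet x.1 x.2) (ρ.symm p) (ρ.symm q)
        = (∑ x ∈ Finset.univ ×ˢ Finset.Icc 1 (n - 1),
            Wgt d x.1 x.2 * DeltaZ (arcSet x.1 x.2) (ρ.symm p) (ρ.symm q)) / 4 := by
      rw [Finset.sum_div]
      exact Finset.sum_congr rfl fun x _ => by ring
    rw [e, k]
    ring

lemma forward_dir {n : ℕ} [NeZero n] (δ : ZMod n → ZMod n → ℝ)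
    (h : CircularDecomposable δ) : PermutedKalmanson δ := by
  obtain ⟨𝒞, α, σ, hne, hpos, harc, hsum⟩ := h
  refine ⟨σ, fun i j k l h1 h2 h3 => ?_⟩
  have keyA : ∀ A ∈ 𝒞,
      (DeltaZ A (σ i) (σ j) + DeltaZ A (σ k) (σ l)
        ≤ DeltaZ A (σ i) (σ k) + DeltaZ A (σ j) (σ l)) ∧
      (DeltaZ A (σ i) (σ l) + DeltaZ A (σ j) (σ k)
        ≤ DeltaZ A (σ i) (σ k) + DeltaZ A (σ j) (σ l)) := by
    intro A hA
    rcases harc A hA with hIs | hIs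
    · obtain ⟨s, m, hAs⟩ := hIs
      have hA2 : A = (arcSet s m).image ⇑σ := by
        rw [hAs]
        unfold arcSet
        rw [Finset.image_image]
        rfl
      rcases le_or_gt m n with hmn | hmn
      · have hD : ∀ p q : ZMod n, DeltaZ A (σ p) (σ q) = DeltaZ (arcSet s m) p q := by
          intro p q
          rw [hA2, DeltaZ_image]
          simp
        simp only [hD]
        exact deltaZ_kalmanson s m hmn h1 h2 h3
      · exfalso
        have : A = Finset.univ := by
          rw [hA2, arcSet_eq_univ hmn.le]
          simp
        have h2 := (hne A hA).2
        rw [this, Finset.compl_univ] at h2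
        exact Finset.not_nonempty_empty h2
    · obtain ⟨s, m, hAs⟩ := hIs
      have hA2 : Aᶜ = (arcSet s m).image ⇑σ := by
        rw [hAs]
        unfold arcSet
        rw [Finset.image_image]
        rfl
      rcases le_or_gt m n with hmn | hmn
      · have hD : ∀ p q : ZMod n, DeltaZ A (σ p) (σ q) = DeltaZ (arcSet s m) p q := by
          intro p q
          rw [← DeltaZ_compl, hA2, DeltaZ_image]
          simp
        simp only [hD]
        exact deltaZ_kalmanson s m hmn h1 h2 h3
      · exfalso
        have hcu : Aᶜ = Finset.univ := by
          rw [hA2, arcSet_eq_univ hmn.le]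
          simp
        have hAe : A = ∅ := by
          have := congrArg compl hcu
          rwa [compl_compl, Finset.compl_univ] at this
        have h2 := (hne A hA).1
        rw [hAe] at h2
        exact Finset.not_nonempty_empty h2
  constructor
  · simp only [hsum]
    rw [← Finset.sum_add_distrib, ← Finset.sum_add_distrib]
    apply Finset.sum_le_sum
    intro A hA
    have hk := (keyA A hA).1
    have hp := (hpos A hA).le
    nlinarith [mul_le_mul_of_nonneg_left hk hp]
  · simp only [hsum]
    rw [← Finset.sum_add_distrib, ← Finset.sum_add_distrib]
    apply Finset.sum_le_sum
    intro A hA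
    have hk := (keyA A hA).2
    have hp := (hpos A hA).le
    nlinarith [mul_le_mul_of_nonneg_left hk hp]


/-- A metric on a finite set of cardinality `n ≥ 4` is circular decomposable iff it
is a permuted Kalmanson matrix. -/
theorem stmt14 (n : ℕ) [NeZero n] (hn : 4 ≤ n) (δ : ZMod n → ZMod n → ℝ)
    (hsymm : ∀ p q, δ p q = δ q p) (hdiag : ∀ p, δ p p = 0)
    (htri : ∀ p q r, δ p r ≤ δ p q + δ q r) :
    CircularDecomposable δ ↔ PermutedKalmanson δ := by
  constructor
  · exact forward_dir δ
  · exact backward_dir hn δ hsymm hdiag htri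
end
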